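/- Let τ be an exotic coloured tree with effective size |τ| > 1. Then |τ|!/τ! = Σ_{τ' ∈ R_e⁻(τ)} |τ'|!/τ'!, where the sum runs (with multiplicity) over the family R_e⁻(τ) of trees obtained from τ by removing one effective edge at the root. -/

import Mathlib

/-- The two colours for non-root vertices of an exotic coloured tree. -/
inductive XColour : Type
  | alpha : XColour
  | beta : XColour
  deriving DecidableEq

/-- An exotic coloured tree: a finite non-planar rooted tree with vertex set
`Fin (n+1)`, distinguished (uncoloured) root `0`, edges oriented towards the root
(encoded by the parent map), whose non-root vertices are coloured by `{α, β}`,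
together with a fixed perfect pairing `mate` of the β-vertices (the exotic
decoration); in particular the number of β-vertices is even. -/
structure ExoticTree : Type where
  n : ℕ
  parent : Fin (n + 1) → Fin (n + 1)
  colour : Fin (n + 1) → Option XColour
  mate : Fin (n + 1) → Fin (n + 1)
  parent_root : parent 0 = 0
  reaches_root : ∀ v, parent^[n] v = 0
  colour_root : colour 0 = none
  colour_nonroot : ∀ v, v ≠ 0 → colour v ≠ none
  mate_beta : ∀ v, colour v = some XColour.beta →
      colour (mate v) = some XColour.beta ∧ mate (mate v) = v ∧ mate v ≠ v
  mate_nonbeta : ∀ v, colour v ≠ some XColour.beta → mate v = v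

namespace ExoticTree

/-- The number of children (incoming edges) `𝔫(v)` of a vertex. -/
def nChildren (t : ExoticTree) (v : Fin (t.n + 1)) : ℕ :=
  (Finset.univ.filter fun w => t.parent w = v ∧ w ≠ v).card

/-- A vertex is a leaf if it has no children. -/
def IsLeaf (t : ExoticTree) (v : Fin (t.n + 1)) : Prop := ∀ w, t.parent w = v → w = v

/-- The number of α-vertices. -/
def numAlpha (t : ExoticTree) : ℕ :=
  (Finset.univ.filter fun v : Fin (t.n + 1) => t.colour v = some XColour.alpha).card

/-- The number of β-vertices. -/
def numBeta (t : ExoticTree) : ℕ :=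
  (Finset.univ.filter fun v : Fin (t.n + 1) => t.colour v = some XColour.beta).card

/-- The number of β-pairs (each pair represented by its smaller member). -/
def numPairs (t : ExoticTree) : ℕ :=
  (Finset.univ.filter fun v : Fin (t.n + 1) =>
    t.colour v = some XColour.beta ∧ v < t.mate v).card

/-- The effective size `|τ|`: `1` (the root) plus the number of α-vertices plus the
number of β-pairs. -/
def effSize (t : ExoticTree) : ℕ := 1 + t.numAlpha + t.numPairs

/-- The edge grading `𝔩(τ) = |τ| − 1`. -/
def edgeCount (t : ExoticTree) : ℕ := t.effSize - 1

/-- Isomorphism of exotic coloured trees: a root-preserving bijection of the vertices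
commuting with the parent maps and preserving colours and the β-pairings. -/
def Iso (t₁ t₂ : ExoticTree) : Prop :=
  ∃ e : Fin (t₁.n + 1) ≃ Fin (t₂.n + 1), e 0 = 0 ∧
    (∀ v, t₂.parent (e v) = e (t₁.parent v)) ∧
    (∀ v, t₂.colour (e v) = t₁.colour v) ∧
    (∀ v, t₂.mate (e v) = e (t₁.mate v))

/-- The symmetry factor `σₑ(τ)`: the order of the group of automorphisms (root-preserving
tree automorphisms preserving colours and mapping paired β-vertices to paired
β-vertices). -/
noncomputable def sigmaE (t : ExoticTree) : ℕ :=
  Nat.card {g : Equiv.Perm (Fin (t.n + 1)) //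
    g 0 = 0 ∧ (∀ v, t.parent (g v) = g (t.parent v)) ∧
    (∀ v, t.colour (g v) = t.colour v) ∧ (∀ v, t.mate (g v) = g (t.mate v))}


/-- A tree is monotonically labelled (by creation order) if every non-root vertex is
larger than its parent. -/
def IsMonotoneLabelled (t : ExoticTree) : Prop :=
  ∀ v : Fin (t.n + 1), v ≠ 0 → t.parent v < v

/-- The two members of each β-pair carry consecutive labels (they are created by
consecutive grafting steps). -/
def PairsConsecutive (t : ExoticTree) : Prop :=
  ∀ v, t.colour v = some XColour.beta →
    ((t.mate v : ℕ) = (v : ℕ) + 1 ∨ (v : ℕ) = (t.mate v : ℕ) + 1)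

/-- The number of natural-growth sequences producing `t`.  A natural-growth sequence
(starting from the single-root tree, grafting single α-leaves and simultaneous pairs
of paired β-leaves) is recorded by the tree labelled by creation order — an α-leaf is
created in one step and the two paired β-leaves of one simultaneous grafting occupy
two consecutive labels — together with, for each β-pair, the datum of which of its
two leaves was attached to which of the two (ordered) chosen attachment vertices. -/
noncomputable def numGrowthSeq (t : ExoticTree) : ℕ :=
  2 ^ t.numPairs *
    Nat.card {s : ExoticTree // s.IsMonotoneLabelled ∧ s.PairsConsecutive ∧ Iso s t}

/-- The exotic Connes–Moscovici weight `CM^e(τ)`: the number of natural-growth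
sequences producing `τ`, multiplied by `2^{−(number of β-vertices of τ)}`. -/
noncomputable def CMe (t : ExoticTree) : ℚ :=
  (t.numGrowthSeq : ℚ) / 2 ^ t.numBeta

/-- The α-leaves of `t`. -/
def alphaLeaves (t : ExoticTree) : Finset (Fin (t.n + 1)) :=
  Finset.univ.filter fun v =>
    t.colour v = some XColour.alpha ∧ ∀ w, t.parent w = v → w = v

/-- The β-pairs both of whose members are leaves (each pair represented by its
smaller member). -/
def betaLeafPairs (t : ExoticTree) : Finset (Fin (t.n + 1)) :=
  Finset.univ.filter fun v =>
    t.colour v = some XColour.beta ∧ v < t.mate v ∧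
    (∀ w, t.parent w = v → w = v) ∧ (∀ w, t.parent w = t.mate v → w = t.mate v)

/-- `t'` is (a copy of) the exotic coloured tree obtained from `t` by removing the
α-leaf `ℓ` together with its edge. -/
def IsAlphaLeafRemoval (t : ExoticTree) (ℓ : Fin (t.n + 1)) (t' : ExoticTree) : Prop :=
  t.colour ℓ = some XColour.alpha ∧ t.IsLeaf ℓ ∧
  ∃ e : Fin (t'.n + 1) ↪ Fin (t.n + 1), e 0 = 0 ∧ Set.range e = {u | u ≠ ℓ} ∧
    (∀ w, t.colour (e w) = t'.colour w) ∧
    (∀ w, t.parent (e w) = e (t'.parent w)) ∧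
    (∀ w, t.mate (e w) = e (t'.mate w))

/-- `t'` is (a copy of) the exotic coloured tree obtained from `t` by removing the
paired couple of β-leaves `v`, `mate v` together with their edges. -/
def IsBetaPairLeafRemoval (t : ExoticTree) (v : Fin (t.n + 1)) (t' : ExoticTree) : Prop :=
  t.colour v = some XColour.beta ∧ t.IsLeaf v ∧ t.IsLeaf (t.mate v) ∧
  ∃ e : Fin (t'.n + 1) ↪ Fin (t.n + 1), e 0 = 0 ∧
    Set.range e = {u | u ≠ v ∧ u ≠ t.mate v} ∧
    (∀ w, t.colour (e w) = t'.colour w) ∧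
    (∀ w, t.parent (e w) = e (t'.parent w)) ∧
    (∀ w, t.mate (e w) = e (t'.mate w))

/-- The defining property of the exotic tree factorial `τ!`:
`•! = 1` for the single-root tree, and the recursion
`|τ|/τ! = Σ_{τ' ∈ T_e⁻(τ)} 1/τ'!`, where `T_e⁻(τ)` consists of the exotic coloured
trees obtained from `τ` by removing one α-leaf or one paired couple of β-leaves
(together with their edges). -/
def IsTreeFactorial (fac : ExoticTree → ℚ) : Prop :=
  (∀ t : ExoticTree, t.n = 0 → fac t = 1) ∧
  ∀ t : ExoticTree, 0 < t.n →
    ∀ (rα : (ℓ : Fin (t.n + 1)) → ℓ ∈ t.alphaLeaves → ExoticTree)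
      (rβ : (v : Fin (t.n + 1)) → v ∈ t.betaLeafPairs → ExoticTree),
      (∀ ℓ h, t.IsAlphaLeafRemoval ℓ (rα ℓ h)) →
      (∀ v h, t.IsBetaPairLeafRemoval v (rβ v h)) →
      (t.effSize : ℚ) / fac t =
        (∑ ℓ ∈ t.alphaLeaves.attach, 1 / fac (rα ℓ.1 ℓ.2)) +
        ∑ v ∈ t.betaLeafPairs.attach, 1 / fac (rβ v.1 v.2)


/-- The α-vertices that are children of the root (effective α-edges at the root). -/
def rootAlphaChildren (t : ExoticTree) : Finset (Fin (t.n + 1)) :=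
  Finset.univ.filter fun v =>
    t.colour v = some XColour.alpha ∧ t.parent v = 0 ∧ v ≠ 0

/-- The β-pairs both of whose members are children of the root (effective β-edges at
the root; each pair represented by its smaller member). -/
def rootBetaPairs (t : ExoticTree) : Finset (Fin (t.n + 1)) :=
  Finset.univ.filter fun v =>
    t.colour v = some XColour.beta ∧ v < t.mate v ∧
    t.parent v = 0 ∧ t.parent (t.mate v) = 0

/-- `t'` is (a copy of) the tree obtained from `t` by removing the effective edge at
the root below the α-vertex `v` (a child of the root): `v` is deleted and its
children are attached to the root. -/
def IsRootAlphaContraction (t : ExoticTree) (v : Fin (t.n + 1)) (t' : ExoticTree) : Prop :=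
  t.colour v = some XColour.alpha ∧ t.parent v = 0 ∧
  ∃ e : Fin (t'.n + 1) ↪ Fin (t.n + 1), e 0 = 0 ∧ Set.range e = {u | u ≠ v} ∧
    (∀ w, t.colour (e w) = t'.colour w) ∧
    (∀ w, t.mate (e w) = e (t'.mate w)) ∧
    ∀ w, (t.parent (e w) = v → t'.parent w = 0) ∧
      (t.parent (e w) ≠ v → e (t'.parent w) = t.parent (e w))

/-- `t'` is (a copy of) the tree obtained from `t` by removing the effective double
edge at the root below the β-pair `v`, `mate v` (both children of the root): both
β-vertices are deleted and all their children are attached to the root. -/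
def IsRootBetaPairContraction (t : ExoticTree) (v : Fin (t.n + 1)) (t' : ExoticTree) : Prop :=
  t.colour v = some XColour.beta ∧ t.parent v = 0 ∧ t.parent (t.mate v) = 0 ∧
  ∃ e : Fin (t'.n + 1) ↪ Fin (t.n + 1), e 0 = 0 ∧
    Set.range e = {u | u ≠ v ∧ u ≠ t.mate v} ∧
    (∀ w, t.colour (e w) = t'.colour w) ∧
    (∀ w, t.mate (e w) = e (t'.mate w)) ∧
    ∀ w, ((t.parent (e w) = v ∨ t.parent (e w) = t.mate v) → t'.parent w = 0) ∧
      (¬(t.parent (e w) = v ∨ t.parent (e w) = t.mate v) →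
        e (t'.parent w) = t.parent (e w))

/- ==================== auxiliary development ==================== -/

section Aux
variable {t : ExoticTree}

/-- pigeonhole: a parent-like map on `Fin (m+1)` that eventually reaches `0`
reaches it within `m` steps. -/
lemma iterate_eq_zero_of_exists {m : ℕ} (f : Fin (m+1) → Fin (m+1)) (h0 : f 0 = 0)
    (v : Fin (m+1)) (hv : ∃ k, f^[k] v = 0) : f^[m] v = 0 := by
  classical
  have hdz : f^[Nat.find hv] v = 0 := Nat.find_spec hv
  set d := Nat.find hv with hd
  have key : ∀ i j : ℕ, i < j → j ≤ d → f^[i] v ≠ f^[j] v := by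
    intro i j hij hjd heq
    have h1 : f^[d - j + i] v = 0 := by
      calc f^[d - j + i] v = f^[d - j] (f^[i] v) := Function.iterate_add_apply f (d-j) i v
        _ = f^[d - j] (f^[j] v) := by rw [heq]
        _ = f^[d] v := by rw [← Function.iterate_add_apply, Nat.sub_add_cancel hjd]
        _ = 0 := hdz
    have h2 : d - j + i < d := by omega
    exact Nat.find_min hv h2 h1
  have hdm : d ≤ m := by
    by_contra hlt
    push_neg at hlt
    have hinj : Function.Injective (fun i : Fin (d+1) => f^[(i:ℕ)] v) := by
      intro i j hij
      simp only at hij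
      rcases lt_trichotomy (i:ℕ) (j:ℕ) with h | h | h
      · exact absurd hij (key _ _ h (Nat.lt_succ_iff.mp j.isLt))
      · exact Fin.ext h
      · exact absurd hij.symm (key _ _ h (Nat.lt_succ_iff.mp i.isLt))
    have := Fintype.card_le_of_injective _ hinj
    simp only [Fintype.card_fin] at this
    omega
  calc f^[m] v = f^[m-d] (f^[d] v) := by
        rw [← Function.iterate_add_apply, Nat.sub_add_cancel hdm]
    _ = 0 := by rw [hdz, Function.iterate_fixed h0]

lemma card_le_of_notmem_zero (S : Finset (Fin (t.n+1))) (h0 : (0 : Fin (t.n+1)) ∉ S) :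
    S.card ≤ t.n := by
  have hsub : S ⊆ Finset.univ.erase 0 := fun x hx =>
    Finset.mem_erase.mpr ⟨fun h => h0 (h ▸ hx), Finset.mem_univ x⟩
  calc S.card ≤ (Finset.univ.erase (0 : Fin (t.n+1))).card := Finset.card_le_card hsub
    _ = t.n := by
        rw [Finset.card_erase_of_mem (Finset.mem_univ _), Finset.card_univ, Fintype.card_fin]
        omega

lemma card_compl_eq (S : Finset (Fin (t.n+1))) (h0 : (0 : Fin (t.n+1)) ∉ S) :
    Sᶜ.card = t.n - S.card + 1 := by
  have := card_le_of_notmem_zero S h0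
  rw [Finset.card_compl, Fintype.card_fin]
  omega

/-- the canonical (monotone) embedding of `Fin (t.n - S.card + 1)` onto the
complement of `S`. -/
noncomputable def embC (t : ExoticTree) (S : Finset (Fin (t.n+1)))
    (w : Fin (t.n - S.card + 1)) : Fin (t.n+1) :=
  if h : Sᶜ.card = t.n - S.card + 1 then (Sᶜ.orderIsoOfFin h w : Fin (t.n+1)) else 0

/-- partial inverse of `embC`. -/
noncomputable def invC (t : ExoticTree) (S : Finset (Fin (t.n+1)))
    (u : Fin (t.n+1)) : Fin (t.n - S.card + 1) :=
  if h : Sᶜ.card = t.n - S.card + 1 ∧ u ∈ Sᶜ then (Sᶜ.orderIsoOfFin h.1).symm ⟨u, h.2⟩ else 0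

section embC
variable {S : Finset (Fin (t.n+1))} (h0 : (0 : Fin (t.n+1)) ∉ S)
include h0

lemma embC_notmem (w : Fin (t.n - S.card + 1)) : embC t S w ∉ S := by
  rw [embC, dif_pos (card_compl_eq S h0)]
  exact Finset.mem_compl.mp (Sᶜ.orderIsoOfFin (card_compl_eq S h0) w).2

lemma embC_strictMono : StrictMono (embC t S) := by
  intro a b hab
  rw [embC, embC, dif_pos (card_compl_eq S h0), dif_pos (card_compl_eq S h0)]
  exact (Sᶜ.orderIsoOfFin (card_compl_eq S h0)).strictMono hab

lemma embC_inj : Function.Injective (embC t S) :=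
  (embC_strictMono h0).injective

lemma invC_embC (w : Fin (t.n - S.card + 1)) : invC t S (embC t S w) = w := by
  rw [embC, dif_pos (card_compl_eq S h0), invC,
    dif_pos ⟨card_compl_eq S h0, (Sᶜ.orderIsoOfFin (card_compl_eq S h0) w).2⟩]
  exact (Sᶜ.orderIsoOfFin (card_compl_eq S h0)).symm_apply_eq.mpr (Subtype.ext rfl)

lemma embC_invC {u : Fin (t.n+1)} (hu : u ∉ S) : embC t S (invC t S u) = u := by
  rw [invC, dif_pos ⟨card_compl_eq S h0, Finset.mem_compl.mpr hu⟩, embC,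
    dif_pos (card_compl_eq S h0)]
  simp

lemma embC_surj {u : Fin (t.n+1)} (hu : u ∉ S) : ∃ w, embC t S w = u :=
  ⟨invC t S u, embC_invC h0 hu⟩

lemma embC_zero : embC t S 0 = 0 := by
  have h1 : embC t S (invC t S 0) = 0 := embC_invC h0 h0
  have h2 : embC t S 0 ≤ embC t S (invC t S 0) :=
    (embC_strictMono h0).monotone (Fin.zero_le _)
  rw [h1] at h2
  exact Fin.le_zero_iff.mp h2

end embC
end Aux

section Del
variable {t : ExoticTree}

/-- total involution property of `mate`. -/
lemma mate_mate (t : ExoticTree) (u : Fin (t.n+1)) : t.mate (t.mate u) = u := by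
  by_cases h : t.colour u = some XColour.beta
  · exact (t.mate_beta u h).2.1
  · rw [t.mate_nonbeta u h, t.mate_nonbeta u h]

lemma ne_zero_of_colour {v : Fin (t.n+1)} {c : XColour} (hv : t.colour v = some c) :
    v ≠ 0 := by
  intro h
  rw [h, t.colour_root] at hv
  exact absurd hv (by simp)

/-- deletion relation with explicit embedding. -/
def DelE (t : ExoticTree) (S : Finset (Fin (t.n+1))) (t' : ExoticTree)
    (e : Fin (t'.n+1) → Fin (t.n+1)) : Prop :=
  Function.Injective e ∧ e 0 = 0 ∧ (∀ u, (∃ w, e w = u) ↔ u ∉ S) ∧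
  (∀ w, t.colour (e w) = t'.colour w) ∧ (∀ w, t.mate (e w) = e (t'.mate w)) ∧
  ∀ w, (t.parent (e w) ∈ S → t'.parent w = 0) ∧
    (t.parent (e w) ∉ S → e (t'.parent w) = t.parent (e w))

/-- `t'` is obtained from `t` by deleting the vertices of `S`, reattaching
children of `S`-vertices to the root. -/
def Del (t : ExoticTree) (S : Finset (Fin (t.n+1))) (t' : ExoticTree) : Prop :=
  ∃ e, DelE t S t' e

/-- parent map of the deletion tree. -/
noncomputable def delP (t : ExoticTree) (S : Finset (Fin (t.n+1)))
    (w : Fin (t.n - S.card + 1)) : Fin (t.n - S.card + 1) :=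
  if t.parent (embC t S w) ∈ S then 0 else invC t S (t.parent (embC t S w))

section delT
variable {S : Finset (Fin (t.n+1))} (h0 : (0 : Fin (t.n+1)) ∉ S)
  (hm : ∀ u, u ∉ S → t.mate u ∉ S)
include h0

lemma delP_zero : delP t S 0 = 0 := by
  rw [delP, embC_zero h0, t.parent_root, if_neg h0]
  have := invC_embC (t := t) (S := S) h0 0
  rwa [embC_zero h0] at this

lemma delP_reaches (v : Fin (t.n - S.card + 1)) : (delP t S)^[t.n - S.card] v = 0 := by
  apply iterate_eq_zero_of_exists _ (delP_zero h0)
  have aux : ∀ (k : ℕ) (w : Fin (t.n - S.card + 1)), t.parent^[k] (embC t S w) = 0 →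
      ∃ j, (delP t S)^[j] w = 0 := by
    intro k
    induction k with
    | zero =>
      intro w hw
      refine ⟨0, ?_⟩
      simp only [Function.iterate_zero, id]
      apply embC_inj h0
      rw [embC_zero h0]
      exact hw
    | succ k ih =>
      intro w hw
      by_cases hs : t.parent (embC t S w) ∈ S
      · exact ⟨1, by simp [delP, hs]⟩
      · have he : embC t S (invC t S (t.parent (embC t S w))) = t.parent (embC t S w) :=
          embC_invC h0 hs
        have hw' : t.parent^[k] (embC t S (invC t S (t.parent (embC t S w)))) = 0 := by
          rw [he, ← Function.iterate_succ_apply]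
          exact hw
        obtain ⟨j, hj⟩ := ih _ hw'
        refine ⟨j + 1, ?_⟩
        rw [Function.iterate_succ_apply]
        have : delP t S w = invC t S (t.parent (embC t S w)) := if_neg hs
        rw [this]
        exact hj
  exact aux t.n v (t.reaches_root (embC t S v))

/-- the deletion tree: delete the vertices of `S` (which must be mate-closed and
avoid the root), reattaching children of deleted vertices to the root. -/
@[reducible]
noncomputable def delT' : ExoticTree where
  n := t.n - S.card
  parent := delP t S
  colour w := t.colour (embC t S w)
  mate w := invC t S (t.mate (embC t S w))
  parent_root := delP_zero h0
  reaches_root := delP_reaches h0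
  colour_root := by
    show t.colour (embC t S 0) = none
    rw [embC_zero h0]; exact t.colour_root
  colour_nonroot := by
    intro v hv
    show t.colour (embC t S v) ≠ none
    apply t.colour_nonroot
    intro h
    apply hv
    apply embC_inj h0
    rw [embC_zero h0]
    exact h
  mate_beta := by
    intro v hv
    replace hv : t.colour (embC t S v) = some XColour.beta := hv
    have hu : embC t S v ∉ S := embC_notmem h0 v
    obtain ⟨hcβ, hmmate, hne⟩ := t.mate_beta (embC t S v) hv
    have hmu : t.mate (embC t S v) ∉ S := hm _ hu
    have he : embC t S (invC t S (t.mate (embC t S v))) = t.mate (embC t S v) :=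
      embC_invC h0 hmu
    refine ⟨?_, ?_, ?_⟩
    · show t.colour (embC t S (invC t S (t.mate (embC t S v)))) = some XColour.beta
      rw [he]
      exact hcβ
    · show invC t S (t.mate (embC t S (invC t S (t.mate (embC t S v))))) = v
      rw [he, hmmate, invC_embC h0]
    · show invC t S (t.mate (embC t S v)) ≠ v
      intro h
      apply hne
      have := congrArg (embC t S) h
      rw [he] at this
      exact this
  mate_nonbeta := by
    intro v hv
    replace hv : t.colour (embC t S v) ≠ some XColour.beta := hv
    show invC t S (t.mate (embC t S v)) = v
    rw [t.mate_nonbeta _ hv, invC_embC h0]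

lemma delE_delT' : DelE t S (delT' h0 hm) (embC t S) := by
  refine ⟨embC_inj h0, embC_zero h0, ?_, fun w => rfl, ?_, ?_⟩
  · intro u
    constructor
    · rintro ⟨w, rfl⟩; exact embC_notmem h0 w
    · exact embC_surj h0
  · intro w
    exact (embC_invC h0 (hm _ (embC_notmem h0 w))).symm
  · intro w
    constructor
    · intro hs; exact if_pos hs
    · intro hs
      show embC t S (delP t S w) = _
      unfold delP
      rw [if_neg hs, embC_invC h0 hs]

end delT

/-- total version of the deletion tree. -/
noncomputable def delT (t : ExoticTree) (S : Finset (Fin (t.n+1))) : ExoticTree :=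
  if h : (0 : Fin (t.n+1)) ∉ S ∧ (∀ u, u ∉ S → t.mate u ∉ S) then delT' h.1 h.2 else t

lemma delT_eq {S : Finset (Fin (t.n+1))} (h0 : (0 : Fin (t.n+1)) ∉ S)
    (hm : ∀ u, u ∉ S → t.mate u ∉ S) : delT t S = delT' h0 hm := dif_pos ⟨h0, hm⟩

lemma del_delT {S : Finset (Fin (t.n+1))} (h0 : (0 : Fin (t.n+1)) ∉ S)
    (hm : ∀ u, u ∉ S → t.mate u ∉ S) : Del t S (delT t S) := by
  rw [delT_eq h0 hm]
  exact ⟨_, delE_delT' h0 hm⟩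

/-- deletion of a single (α) vertex. -/
noncomputable def del1 (t : ExoticTree) (v : Fin (t.n+1)) : ExoticTree := delT t {v}

/-- deletion of a β-pair. -/
noncomputable def del2 (t : ExoticTree) (v : Fin (t.n+1)) : ExoticTree :=
  delT t {v, t.mate v}

lemma del1_hyps {v : Fin (t.n+1)} (hv : t.colour v = some XColour.alpha) :
    ((0 : Fin (t.n+1)) ∉ ({v} : Finset _)) ∧
      (∀ u, u ∉ ({v} : Finset (Fin (t.n+1))) → t.mate u ∉ ({v} : Finset _)) := by
  constructor
  · simp only [Finset.mem_singleton]
    exact fun h => ne_zero_of_colour hv h.symm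
  · intro u hu hc
    simp only [Finset.mem_singleton] at hu hc
    apply hu
    rw [← mate_mate t u, hc, t.mate_nonbeta v (by rw [hv]; simp)]

lemma del_del1 {v : Fin (t.n+1)} (hv : t.colour v = some XColour.alpha) :
    Del t {v} (del1 t v) :=
  del_delT (del1_hyps hv).1 (del1_hyps hv).2

lemma del2_hyps {v : Fin (t.n+1)} (hv : t.colour v = some XColour.beta) :
    ((0 : Fin (t.n+1)) ∉ ({v, t.mate v} : Finset _)) ∧
      (∀ u, u ∉ ({v, t.mate v} : Finset (Fin (t.n+1))) →
        t.mate u ∉ ({v, t.mate v} : Finset _)) := by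
  obtain ⟨hcβ, hmm, hne⟩ := t.mate_beta v hv
  constructor
  · simp only [Finset.mem_insert, Finset.mem_singleton]
    rintro (h | h)
    · exact ne_zero_of_colour hv h.symm
    · exact ne_zero_of_colour hcβ h.symm
  · intro u hu hc
    simp only [Finset.mem_insert, Finset.mem_singleton] at hu hc
    apply hu
    rcases hc with h | h
    · right; rw [← mate_mate t u, h]
    · left; rw [← mate_mate t u, h, hmm]

lemma del_del2 {v : Fin (t.n+1)} (hv : t.colour v = some XColour.beta) :
    Del t {v, t.mate v} (del2 t v) :=
  del_delT (del2_hyps hv).1 (del2_hyps hv).2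

end Del

section Counting
variable {t t' : ExoticTree} {S : Finset (Fin (t.n+1))}

lemma two_mul_numPairs (t : ExoticTree) : 2 * t.numPairs = t.numBeta := by
  classical
  set A := Finset.univ.filter fun v : Fin (t.n+1) =>
    t.colour v = some XColour.beta ∧ v < t.mate v with hA
  set B := Finset.univ.filter fun v : Fin (t.n+1) =>
    t.colour v = some XColour.beta ∧ t.mate v < v with hB
  have hcard : A.card = B.card := by
    apply Finset.card_bij (fun v _ => t.mate v)
    · intro v hv
      simp only [hA, hB, Finset.mem_filter, Finset.mem_univ, true_and] at hv ⊢
      exact ⟨(t.mate_beta v hv.1).1, by rw [mate_mate]; exact hv.2⟩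
    · intro v hv w hw h
      have := congrArg t.mate h
      rwa [mate_mate, mate_mate] at this
    · intro v hv
      simp only [hA, hB, Finset.mem_filter, Finset.mem_univ, true_and] at hv ⊢
      exact ⟨t.mate v, ⟨(t.mate_beta v hv.1).1, by rw [mate_mate]; exact hv.2⟩, mate_mate t v⟩
  have hunion : Finset.univ.filter (fun v : Fin (t.n+1) =>
      t.colour v = some XColour.beta) = A ∪ B := by
    ext v
    simp only [hA, hB, Finset.mem_filter, Finset.mem_univ, true_and, Finset.mem_union]
    constructor
    · intro hβ
      rcases lt_trichotomy v (t.mate v) with h | h | h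
      · exact Or.inl ⟨hβ, h⟩
      · exact absurd h.symm (t.mate_beta v hβ).2.2
      · exact Or.inr ⟨hβ, h⟩
    · rintro (⟨hβ, _⟩ | ⟨hβ, _⟩) <;> exact hβ
  have hdisj : Disjoint A B := by
    rw [Finset.disjoint_left]
    intro v hv hw
    simp only [hA, hB, Finset.mem_filter, Finset.mem_univ, true_and] at hv hw
    exact absurd (hv.2.trans hw.2) (lt_irrefl v)
  rw [numBeta, hunion, Finset.card_union_of_disjoint hdisj, ← hcard, numPairs, ← hA]
  ring

lemma del_card_colour (h : Del t S t') (c : XColour) :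
    (Finset.univ.filter fun w => t'.colour w = some c).card
      + (S.filter fun u => t.colour u = some c).card
      = (Finset.univ.filter fun u => t.colour u = some c).card := by
  classical
  obtain ⟨e, hinj, h0, hrange, hcol, -, -⟩ := h
  have himg : ((Finset.univ.filter fun u => t.colour u = some c).filter
      fun u => u ∉ S).card = (Finset.univ.filter fun w => t'.colour w = some c).card := by
    symm
    apply Finset.card_bij (fun w _ => e w)
    · intro w hw
      simp only [Finset.mem_filter, Finset.mem_univ, true_and] at hw ⊢
      exact ⟨by rw [hcol]; exact hw, (hrange (e w)).mp ⟨w, rfl⟩⟩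
    · intro w hw w' hw' hww; exact hinj hww
    · intro u hu
      simp only [Finset.mem_filter, Finset.mem_univ, true_and] at hu
      obtain ⟨w, rfl⟩ := (hrange u).mpr hu.2
      refine ⟨w, ?_, rfl⟩
      simp only [Finset.mem_filter, Finset.mem_univ, true_and]
      rw [← hcol]
      exact hu.1
  have hsplit : ((Finset.univ.filter fun u : Fin (t.n+1) => t.colour u = some c).filter
        fun u => u ∈ S).card
      + ((Finset.univ.filter fun u : Fin (t.n+1) => t.colour u = some c).filter
        fun u => u ∉ S).card
      = (Finset.univ.filter fun u : Fin (t.n+1) => t.colour u = some c).card :=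
    Finset.card_filter_add_card_filter_not (fun u => u ∈ S)
  have hSeq : ((Finset.univ.filter fun u : Fin (t.n+1) => t.colour u = some c).filter
      fun u => u ∈ S) = S.filter fun u => t.colour u = some c := by
    ext u
    simp only [Finset.mem_filter, Finset.mem_univ, true_and]
    tauto
  rw [hSeq] at hsplit
  omega

lemma del_numAlpha (h : Del t S t') :
    t'.numAlpha + (S.filter fun u => t.colour u = some XColour.alpha).card = t.numAlpha :=
  del_card_colour h XColour.alpha

lemma del_numBeta (h : Del t S t') :
    t'.numBeta + (S.filter fun u => t.colour u = some XColour.beta).card = t.numBeta :=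
  del_card_colour h XColour.beta

lemma del_n (h : Del t S t') : t'.n + S.card = t.n := by
  classical
  obtain ⟨e, hinj, h0, hrange, -, -, -⟩ := h
  have h0S : (0 : Fin (t.n+1)) ∉ S := by
    rw [← hrange 0]
    exact ⟨0, h0⟩
  have hcard : (Finset.univ : Finset (Fin (t'.n+1))).card = Sᶜ.card := by
    apply Finset.card_bij (fun w _ => e w)
    · intro w hw
      exact Finset.mem_compl.mpr ((hrange (e w)).mp ⟨w, rfl⟩)
    · intro w hw w' hw' hww; exact hinj hww
    · intro u hu
      obtain ⟨w, rfl⟩ := (hrange u).mpr (Finset.mem_compl.mp hu)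
      exact ⟨w, Finset.mem_univ w, rfl⟩
  rw [Finset.card_univ, Fintype.card_fin, card_compl_eq S h0S] at hcard
  have := card_le_of_notmem_zero S h0S
  omega

lemma del_effSize (h : Del t S t') :
    2 * t.effSize = 2 * t'.effSize
      + 2 * (S.filter fun u => t.colour u = some XColour.alpha).card
      + (S.filter fun u => t.colour u = some XColour.beta).card := by
  have h1 := del_numAlpha h
  have h2 := del_numBeta h
  have p1 := two_mul_numPairs t
  have p2 := two_mul_numPairs t'
  unfold effSize at *
  omega

lemma effSize_congr {t₁ t₂ : ExoticTree} (h₁ : Del t S t₁) (h₂ : Del t S t₂) :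
    t₁.effSize = t₂.effSize := by
  have a1 := del_effSize h₁
  have a2 := del_effSize h₂
  omega

lemma n_congr {t₁ t₂ : ExoticTree} (h₁ : Del t S t₁) (h₂ : Del t S t₂) :
    t₁.n = t₂.n := by
  have a1 := del_n h₁
  have a2 := del_n h₂
  omega

lemma effSize_del1 {v : Fin (t.n+1)} (hv : t.colour v = some XColour.alpha) :
    t.effSize = (del1 t v).effSize + 1 := by
  have h := del_effSize (del_del1 hv)
  rw [Finset.filter_singleton, Finset.filter_singleton, if_pos hv,
    if_neg (by rw [hv]; simp)] at h
  simp only [Finset.card_singleton, Finset.card_empty] at h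
  omega

lemma n_del1 {v : Fin (t.n+1)} (hv : t.colour v = some XColour.alpha) :
    (del1 t v).n + 1 = t.n := by
  have h := del_n (del_del1 hv)
  rwa [Finset.card_singleton] at h

lemma card_pair_mate {v : Fin (t.n+1)} (hv : t.colour v = some XColour.beta) :
    ({v, t.mate v} : Finset (Fin (t.n+1))).card = 2 :=
  Finset.card_pair (fun h => (t.mate_beta v hv).2.2 h.symm)

lemma effSize_del2 {v : Fin (t.n+1)} (hv : t.colour v = some XColour.beta) :
    t.effSize = (del2 t v).effSize + 1 := by
  have h := del_effSize (del_del2 hv)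
  have hne : v ≠ t.mate v := fun h => (t.mate_beta v hv).2.2 h.symm
  have hfα : ({v, t.mate v} : Finset (Fin (t.n+1))).filter
      (fun u => t.colour u = some XColour.alpha) = ∅ := by
    ext u
    simp only [Finset.mem_filter, Finset.mem_insert, Finset.mem_singleton,
      Finset.notMem_empty, iff_false, not_and]
    rintro (rfl | rfl)
    · rw [hv]; simp
    · rw [(t.mate_beta v hv).1]; simp
  have hfβ : ({v, t.mate v} : Finset (Fin (t.n+1))).filter
      (fun u => t.colour u = some XColour.beta) = {v, t.mate v} := by
    apply Finset.filter_true_of_mem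
    intro u hu
    rcases Finset.mem_insert.mp hu with rfl | hu
    · exact hv
    · rw [Finset.mem_singleton.mp hu]
      exact (t.mate_beta v hv).1
  rw [hfα, hfβ, card_pair_mate hv] at h
  simp only [Finset.card_empty] at h
  omega

lemma n_del2 {v : Fin (t.n+1)} (hv : t.colour v = some XColour.beta) :
    (del2 t v).n + 2 = t.n := by
  have h := del_n (del_del2 hv)
  rwa [card_pair_mate hv] at h

end Counting

section IsoM
variable {t t₁ t₂ r : ExoticTree}

/-- isomorphism with an explicit equivalence. -/
def IsoE (t₁ t₂ : ExoticTree) (g : Fin (t₁.n+1) ≃ Fin (t₂.n+1)) : Prop :=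
  g 0 = 0 ∧ (∀ v, t₂.parent (g v) = g (t₁.parent v)) ∧
  (∀ v, t₂.colour (g v) = t₁.colour v) ∧ (∀ v, t₂.mate (g v) = g (t₁.mate v))

lemma iso_of_isoE {g : Fin (t₁.n+1) ≃ Fin (t₂.n+1)} (h : IsoE t₁ t₂ g) : Iso t₁ t₂ :=
  ⟨g, h⟩

lemma isoE_symm {g : Fin (t₁.n+1) ≃ Fin (t₂.n+1)} (h : IsoE t₁ t₂ g) :
    IsoE t₂ t₁ g.symm := by
  obtain ⟨h0, hp, hc, hm⟩ := h
  refine ⟨by rw [← h0, Equiv.symm_apply_apply], ?_, ?_, ?_⟩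
  · intro v
    apply g.injective
    rw [Equiv.apply_symm_apply, ← hp, Equiv.apply_symm_apply]
  · intro v
    rw [← hc, Equiv.apply_symm_apply]
  · intro v
    apply g.injective
    rw [Equiv.apply_symm_apply, ← hm, Equiv.apply_symm_apply]

lemma isoE_isLeaf {g : Fin (t₁.n+1) ≃ Fin (t₂.n+1)} (h : IsoE t₁ t₂ g)
    {v : Fin (t₁.n+1)} (hv : t₁.IsLeaf v) : t₂.IsLeaf (g v) := by
  obtain ⟨h0, hp, hc, hm⟩ := h
  intro w hw
  have : t₂.parent (g (g.symm w)) = g v := by rwa [Equiv.apply_symm_apply]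
  rw [hp] at this
  have h2 : t₁.parent (g.symm w) = v := g.injective this
  have := hv _ h2
  rw [← this, Equiv.apply_symm_apply]

lemma isoE_mem_alphaLeaves {g : Fin (t₁.n+1) ≃ Fin (t₂.n+1)} (h : IsoE t₁ t₂ g)
    {v : Fin (t₁.n+1)} (hv : v ∈ t₁.alphaLeaves) : g v ∈ t₂.alphaLeaves := by
  rw [alphaLeaves, Finset.mem_filter] at hv ⊢
  exact ⟨Finset.mem_univ _, by rw [h.2.2.1]; exact hv.2.1, isoE_isLeaf h hv.2.2⟩

lemma isoE_betaLeafData {g : Fin (t₁.n+1) ≃ Fin (t₂.n+1)} (h : IsoE t₁ t₂ g)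
    {v : Fin (t₁.n+1)}
    (hv : t₁.colour v = some XColour.beta ∧ t₁.IsLeaf v ∧ t₁.IsLeaf (t₁.mate v)) :
    t₂.colour (g v) = some XColour.beta ∧ t₂.IsLeaf (g v) ∧ t₂.IsLeaf (t₂.mate (g v)) := by
  refine ⟨by rw [h.2.2.1]; exact hv.1, isoE_isLeaf h hv.2.1, ?_⟩
  rw [h.2.2.2]
  exact isoE_isLeaf h hv.2.2

/-- uniqueness of deletion up to isomorphism. -/
lemma del_unique {S : Finset (Fin (t.n+1))} (h₁ : Del t S t₁) (h₂ : Del t S t₂) :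
    Iso t₁ t₂ := by
  obtain ⟨e₁, hinj₁, hz₁, hr₁, hc₁, hm₁, hp₁⟩ := h₁
  obtain ⟨e₂, hinj₂, hz₂, hr₂, hc₂, hm₂, hp₂⟩ := h₂
  have hex : ∀ w, ∃ w', e₂ w' = e₁ w := fun w => (hr₂ (e₁ w)).mpr ((hr₁ (e₁ w)).mp ⟨w, rfl⟩)
  have hex' : ∀ w, ∃ w', e₁ w' = e₂ w := fun w => (hr₁ (e₂ w)).mpr ((hr₂ (e₂ w)).mp ⟨w, rfl⟩)
  choose G hG using hex
  choose G' hG' using hex'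
  have hleft : ∀ w, G' (G w) = w := by
    intro w
    apply hinj₁
    rw [hG', hG]
  have hright : ∀ w, G (G' w) = w := by
    intro w
    apply hinj₂
    rw [hG, hG']
  set g : Fin (t₁.n+1) ≃ Fin (t₂.n+1) := ⟨G, G', hleft, hright⟩ with hg
  have he : ∀ w, e₂ (g w) = e₁ w := hG
  have hg0 : g 0 = 0 := by
    apply hinj₂
    rw [he, hz₁, hz₂]
  refine ⟨g, hg0, ?_, ?_, ?_⟩
  · intro v
    by_cases hs : t.parent (e₁ v) ∈ S
    · rw [(hp₁ v).1 hs, hg0]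
      exact (hp₂ (g v)).1 (by rw [he]; exact hs)
    · apply hinj₂
      rw [he, (hp₂ (g v)).2 (by rw [he]; exact hs), he, (hp₁ v).2 hs]
  · intro v
    rw [← hc₂ (g v), he, hc₁]
  · intro v
    apply hinj₂
    rw [he, ← hm₂ (g v), he, hm₁]

/-- an isomorphism yields a trivial deletion. -/
lemma del_empty_of_iso (h : Iso t₁ t₂) : Del t₂ (∅ : Finset (Fin (t₂.n+1))) t₁ := by
  obtain ⟨g, hg0, hgp, hgc, hgm⟩ := h
  refine ⟨g, g.injective, hg0, ?_, ?_, ?_, ?_⟩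
  · intro u
    simp only [Finset.notMem_empty, not_false_iff, iff_true]
    exact ⟨g.symm u, by rw [Equiv.apply_symm_apply]⟩
  · intro w; rw [hgc]
  · intro w; rw [hgm]
  · intro w
    refine ⟨fun hs => absurd hs (Finset.notMem_empty _), fun _ => ?_⟩
    rw [hgp]

lemma effSize_iso (h : Iso t₁ t₂) : t₁.effSize = t₂.effSize := by
  have h1 := del_effSize (del_empty_of_iso h)
  simp only [Finset.filter_empty, Finset.card_empty] at h1
  omega

lemma n_iso (h : Iso t₁ t₂) : t₁.n = t₂.n := by
  have h1 := del_n (del_empty_of_iso h)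
  simpa using h1

/-- conversion: a root α-contraction is a deletion. -/
lemma del_of_rootAlphaContraction {v : Fin (t.n+1)} (h : t.IsRootAlphaContraction v t₁) :
    Del t {v} t₁ := by
  obtain ⟨hc, hp, e, hz, hrange, hcol, hmate, hpar⟩ := h
  refine ⟨e, e.injective, hz, ?_, hcol, hmate, ?_⟩
  · intro u
    rw [Finset.mem_singleton]
    constructor
    · rintro ⟨w, rfl⟩
      have : (e w : Fin (t.n+1)) ∈ Set.range (e : Fin (t₁.n+1) → Fin (t.n+1)) :=
        ⟨w, rfl⟩
      rw [hrange] at this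
      exact this
    · intro hu
      have : u ∈ Set.range (e : Fin (t₁.n+1) → Fin (t.n+1)) := by rw [hrange]; exact hu
      exact this
  · intro w
    refine ⟨fun hs => (hpar w).1 (Finset.mem_singleton.mp hs), fun hs => ?_⟩
    exact (hpar w).2 (fun hh => hs (Finset.mem_singleton.mpr hh))

/-- conversion: a root β-pair contraction is a deletion. -/
lemma del_of_rootBetaPairContraction {v : Fin (t.n+1)}
    (h : t.IsRootBetaPairContraction v t₁) : Del t {v, t.mate v} t₁ := by
  obtain ⟨hc, hp, hpm, e, hz, hrange, hcol, hmate, hpar⟩ := h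
  have hmem : ∀ u : Fin (t.n+1), u ∈ ({v, t.mate v} : Finset _) ↔ (u = v ∨ u = t.mate v) := by
    intro u; simp
  refine ⟨e, e.injective, hz, ?_, hcol, hmate, ?_⟩
  · intro u
    rw [hmem]
    constructor
    · rintro ⟨w, rfl⟩
      have : (e w : Fin (t.n+1)) ∈ Set.range (e : Fin (t₁.n+1) → Fin (t.n+1)) := ⟨w, rfl⟩
      rw [hrange] at this
      rintro (h | h)
      exacts [this.1 h, this.2 h]
    · intro hu
      have : u ∈ Set.range (e : Fin (t₁.n+1) → Fin (t.n+1)) := by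
        rw [hrange]; exact ⟨fun h1 => hu (Or.inl h1), fun h2 => hu (Or.inr h2)⟩
      exact this
  · intro w
    refine ⟨fun hs => (hpar w).1 ((hmem _).mp hs), fun hs => ?_⟩
    exact (hpar w).2 (fun hh => hs ((hmem _).mpr hh))

/-- conversion: a deletion of an α-leaf is an α-leaf removal. -/
lemma alphaLeafRemoval_of_del {ℓ : Fin (t.n+1)} (hc : t.colour ℓ = some XColour.alpha)
    (hl : t.IsLeaf ℓ) (h : Del t {ℓ} r) : t.IsAlphaLeafRemoval ℓ r := by
  obtain ⟨e, hinj, hz, hrange, hcol, hmate, hpar⟩ := h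
  have hne : ∀ w, e w ≠ ℓ := by
    intro w hw
    have := (hrange (e w)).mp ⟨w, rfl⟩
    exact this (Finset.mem_singleton.mpr hw)
  refine ⟨hc, hl, ⟨e, hinj⟩, hz, ?_, ?_, ?_, ?_⟩
  · ext u
    simp only [Set.mem_range, Function.Embedding.coeFn_mk, Set.mem_setOf_eq]
    rw [hrange u, Finset.mem_singleton]
  · exact hcol
  · intro w
    simp only [Function.Embedding.coeFn_mk]
    symm
    apply (hpar w).2
    intro hs
    rw [Finset.mem_singleton] at hs
    exact hne w (hl _ hs)
  · exact hmate

/-- conversion: a deletion of a β-leaf pair is a β-pair leaf removal. -/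
lemma betaPairLeafRemoval_of_del {v : Fin (t.n+1)} (hc : t.colour v = some XColour.beta)
    (hl : t.IsLeaf v) (hlm : t.IsLeaf (t.mate v)) (h : Del t {v, t.mate v} r) :
    t.IsBetaPairLeafRemoval v r := by
  obtain ⟨e, hinj, hz, hrange, hcol, hmate, hpar⟩ := h
  have hne : ∀ w, e w ≠ v ∧ e w ≠ t.mate v := by
    intro w
    have := (hrange (e w)).mp ⟨w, rfl⟩
    simp only [Finset.mem_insert, Finset.mem_singleton] at this
    exact ⟨fun hh => this (Or.inl hh), fun hh => this (Or.inr hh)⟩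
  refine ⟨hc, hl, hlm, ⟨e, hinj⟩, hz, ?_, ?_, ?_, ?_⟩
  · ext u
    simp only [Set.mem_range, Function.Embedding.coeFn_mk, Set.mem_setOf_eq]
    rw [hrange u]
    simp only [Finset.mem_insert, Finset.mem_singleton]
    tauto
  · exact hcol
  · intro w
    simp only [Function.Embedding.coeFn_mk]
    symm
    apply (hpar w).2
    intro hs
    simp only [Finset.mem_insert, Finset.mem_singleton] at hs
    rcases hs with hs | hs
    · exact (hne w).1 (hl _ hs)
    · exact (hne w).2 (hlm _ hs)
  · exact hmate

lemma mem_alphaLeaves_iff {ℓ : Fin (t.n+1)} :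
    ℓ ∈ t.alphaLeaves ↔ t.colour ℓ = some XColour.alpha ∧ t.IsLeaf ℓ := by
  rw [alphaLeaves, Finset.mem_filter]
  exact ⟨fun h => ⟨h.2.1, h.2.2⟩, fun h => ⟨Finset.mem_univ _, h.1, h.2⟩⟩

lemma mem_betaLeafPairs_iff {v : Fin (t.n+1)} :
    v ∈ t.betaLeafPairs ↔ t.colour v = some XColour.beta ∧ v < t.mate v ∧
      t.IsLeaf v ∧ t.IsLeaf (t.mate v) := by
  rw [betaLeafPairs, Finset.mem_filter]
  exact ⟨fun h => h.2, fun h => ⟨Finset.mem_univ _, h⟩⟩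

lemma mem_rootAlphaChildren_iff {v : Fin (t.n+1)} :
    v ∈ t.rootAlphaChildren ↔ t.colour v = some XColour.alpha ∧ t.parent v = 0 ∧ v ≠ 0 := by
  rw [rootAlphaChildren, Finset.mem_filter]
  exact ⟨fun h => h.2, fun h => ⟨Finset.mem_univ _, h⟩⟩

lemma mem_rootBetaPairs_iff {v : Fin (t.n+1)} :
    v ∈ t.rootBetaPairs ↔ t.colour v = some XColour.beta ∧ v < t.mate v ∧
      t.parent v = 0 ∧ t.parent (t.mate v) = 0 := by
  rw [rootBetaPairs, Finset.mem_filter]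
  exact ⟨fun h => h.2, fun h => ⟨Finset.mem_univ _, h⟩⟩

/-- the canonical removal of an α-leaf. -/
lemma alphaRemoval_del1 {ℓ : Fin (t.n+1)} (h : ℓ ∈ t.alphaLeaves) :
    t.IsAlphaLeafRemoval ℓ (del1 t ℓ) := by
  rw [mem_alphaLeaves_iff] at h
  exact alphaLeafRemoval_of_del h.1 h.2 (del_del1 h.1)

/-- the canonical removal of a β-leaf pair. -/
lemma betaRemoval_del2 {v : Fin (t.n+1)} (h : v ∈ t.betaLeafPairs) :
    t.IsBetaPairLeafRemoval v (del2 t v) := by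
  rw [mem_betaLeafPairs_iff] at h
  exact betaPairLeafRemoval_of_del h.1 h.2.2.1 h.2.2.2 (del_del2 h.1)

end IsoM

section Transport
variable {t t₁ t₂ r : ExoticTree}

lemma isoE_alphaRemoval {g : Fin (t₁.n+1) ≃ Fin (t₂.n+1)} (hg : IsoE t₁ t₂ g)
    {ℓ : Fin (t₁.n+1)} (h : t₁.IsAlphaLeafRemoval ℓ r) :
    t₂.IsAlphaLeafRemoval (g ℓ) r := by
  obtain ⟨hc, hl, e, hz, hrange, hcol, hpar, hmate⟩ := h
  refine ⟨by rw [hg.2.2.1]; exact hc, isoE_isLeaf hg hl,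
    e.trans g.toEmbedding, ?_, ?_, ?_, ?_, ?_⟩
  · simp only [Function.Embedding.trans_apply, Equiv.coe_toEmbedding, hz, hg.1]
  · ext u
    simp only [Set.mem_range, Function.Embedding.trans_apply, Equiv.coe_toEmbedding,
      Set.mem_setOf_eq]
    constructor
    · rintro ⟨w, rfl⟩ hh
      have hw : (e w : Fin (t₁.n+1)) ∈ Set.range (⇑e) := ⟨w, rfl⟩
      rw [hrange] at hw
      exact hw (g.injective hh)
    · intro hu
      have hw : g.symm u ∈ Set.range (⇑e) := by
        rw [hrange]
        intro hh
        exact hu (by rw [← hh, Equiv.apply_symm_apply])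
      obtain ⟨w, hw⟩ := hw
      exact ⟨w, by rw [hw, Equiv.apply_symm_apply]⟩
  · intro w
    simp only [Function.Embedding.trans_apply, Equiv.coe_toEmbedding]
    rw [hg.2.2.1, hcol]
  · intro w
    simp only [Function.Embedding.trans_apply, Equiv.coe_toEmbedding]
    rw [hg.2.1, hpar]
  · intro w
    simp only [Function.Embedding.trans_apply, Equiv.coe_toEmbedding]
    rw [hg.2.2.2, hmate]

lemma isoE_betaRemoval {g : Fin (t₁.n+1) ≃ Fin (t₂.n+1)} (hg : IsoE t₁ t₂ g)
    {v : Fin (t₁.n+1)} (h : t₁.IsBetaPairLeafRemoval v r) :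
    t₂.IsBetaPairLeafRemoval (g v) r := by
  obtain ⟨hc, hl, hlm, e, hz, hrange, hcol, hpar, hmate⟩ := h
  refine ⟨by rw [hg.2.2.1]; exact hc, isoE_isLeaf hg hl,
    by rw [hg.2.2.2]; exact isoE_isLeaf hg hlm,
    e.trans g.toEmbedding, ?_, ?_, ?_, ?_, ?_⟩
  · simp only [Function.Embedding.trans_apply, Equiv.coe_toEmbedding, hz, hg.1]
  · ext u
    simp only [Set.mem_range, Function.Embedding.trans_apply, Equiv.coe_toEmbedding,
      Set.mem_setOf_eq]
    rw [hg.2.2.2]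
    constructor
    · rintro ⟨w, rfl⟩
      have hw : (e w : Fin (t₁.n+1)) ∈ Set.range (⇑e) := ⟨w, rfl⟩
      rw [hrange] at hw
      exact ⟨fun hh => hw.1 (g.injective hh), fun hh => hw.2 (g.injective hh)⟩
    · intro hu
      have hw : g.symm u ∈ Set.range (⇑e) := by
        rw [hrange]
        constructor
        · intro hh
          exact hu.1 (by rw [← hh, Equiv.apply_symm_apply])
        · intro hh
          exact hu.2 (by rw [← hh, Equiv.apply_symm_apply])
      obtain ⟨w, hw⟩ := hw
      exact ⟨w, by rw [hw, Equiv.apply_symm_apply]⟩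
  · intro w
    simp only [Function.Embedding.trans_apply, Equiv.coe_toEmbedding]
    rw [hg.2.2.1, hcol]
  · intro w
    simp only [Function.Embedding.trans_apply, Equiv.coe_toEmbedding]
    rw [hg.2.1, hpar]
  · intro w
    simp only [Function.Embedding.trans_apply, Equiv.coe_toEmbedding]
    rw [hg.2.2.2, hmate]

lemma betaRemoval_flip {v : Fin (t.n+1)} (hv : t.colour v = some XColour.beta)
    (h : t.IsBetaPairLeafRemoval (t.mate v) r) : t.IsBetaPairLeafRemoval v r := by
  obtain ⟨hc, hl, hlm, e, hz, hrange, hcol, hpar, hmate⟩ := h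
  rw [mate_mate] at hlm
  refine ⟨hv, hlm, hl, e, hz, ?_, hcol, hpar, hmate⟩
  rw [hrange]
  ext u
  simp only [Set.mem_setOf_eq, mate_mate]
  tauto

lemma effSize_pos (t : ExoticTree) : 1 ≤ t.effSize := by
  unfold effSize; omega

lemma div_same_left_inj {a x y : ℚ} (ha : a ≠ 0) (h : a / x = a / y) : x = y := by
  by_cases hx : x = 0
  · by_cases hy : y = 0
    · rw [hx, hy]
    · exfalso
      rw [hx, div_zero] at h
      rcases div_eq_zero_iff.mp h.symm with h' | h'
      · exact ha h'
      · exact hy h'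
  · by_cases hy : y = 0
    · exfalso
      rw [hy, div_zero] at h
      rcases div_eq_zero_iff.mp h with h' | h'
      · exact ha h'
      · exact hx h'
    · have := (div_eq_div_iff hx hy).mp h
      exact mul_left_cancel₀ ha (by linarith)

end Transport

section FacLemmas
variable {t t₁ t₂ : ExoticTree} (fac : ExoticTree → ℚ) (hfac : IsTreeFactorial fac)
include hfac

lemma fac_iso (h : Iso t₁ t₂) : fac t₁ = fac t₂ := by
  classical
  obtain ⟨g, hgE⟩ := h
  have hgE : IsoE t₁ t₂ g := hgE
  have hn : t₁.n = t₂.n := n_iso (iso_of_isoE hgE)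
  by_cases hz : t₁.n = 0
  · rw [hfac.1 t₁ hz, hfac.1 t₂ (by omega)]
  · have hpos₁ : 0 < t₁.n := Nat.pos_of_ne_zero hz
    have hpos₂ : 0 < t₂.n := by omega
    have hgs : IsoE t₂ t₁ g.symm := isoE_symm hgE
    set pick : Fin (t₂.n+1) → Fin (t₁.n+1) :=
      fun v' => if g.symm v' < t₁.mate (g.symm v') then g.symm v' else t₁.mate (g.symm v')
      with hpick_def
    set φ : Fin (t₁.n+1) → Fin (t₂.n+1) :=
      fun v => if g v < g (t₁.mate v) then g v else g (t₁.mate v) with hφ_def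
    -- pick lands in betaLeafPairs and hits the pair of v'
    have hpick : ∀ v' ∈ t₂.betaLeafPairs, pick v' ∈ t₁.betaLeafPairs ∧
        (g (pick v') = v' ∨ g (pick v') = t₂.mate v') := by
      intro v' hv'
      rw [mem_betaLeafPairs_iff] at hv'
      obtain ⟨hβ, hlt, hl1, hl2⟩ := hv'
      have hc1 : t₁.colour (g.symm v') = some XColour.beta := by
        rw [hgs.2.2.1]; exact hβ
      have hm1 : t₁.mate (g.symm v') = g.symm (t₂.mate v') := hgs.2.2.2 v'
      have hlf1 : t₁.IsLeaf (g.symm v') := isoE_isLeaf hgs hl1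
      have hlf2 : t₁.IsLeaf (t₁.mate (g.symm v')) := by
        rw [hm1]; exact isoE_isLeaf hgs hl2
      by_cases hlt1 : g.symm v' < t₁.mate (g.symm v')
      · rw [hpick_def]
        simp only [if_pos hlt1]
        refine ⟨mem_betaLeafPairs_iff.mpr ⟨hc1, hlt1, hlf1, hlf2⟩, Or.inl ?_⟩
        rw [Equiv.apply_symm_apply]
      · rw [hpick_def]
        simp only [if_neg hlt1]
        have hne : t₁.mate (g.symm v') ≠ g.symm v' := (t₁.mate_beta _ hc1).2.2
        have hlt2 : t₁.mate (g.symm v') < g.symm v' :=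
          lt_of_le_of_ne (not_lt.mp hlt1) hne
        refine ⟨mem_betaLeafPairs_iff.mpr ⟨(t₁.mate_beta _ hc1).1,
          by rw [mate_mate]; exact hlt2, hlf2, by rw [mate_mate]; exact hlf1⟩, Or.inr ?_⟩
        rw [hm1, Equiv.apply_symm_apply]
    have hpickφ : ∀ v ∈ t₁.betaLeafPairs, pick (φ v) = v := by
      intro v hv
      rw [mem_betaLeafPairs_iff] at hv
      obtain ⟨hβ, hlt, -, -⟩ := hv
      by_cases hc : g v < g (t₁.mate v)
      · rw [hφ_def]
        simp only [if_pos hc]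
        rw [hpick_def]
        simp only [Equiv.symm_apply_apply, if_pos hlt]
      · rw [hφ_def]
        simp only [if_neg hc]
        rw [hpick_def]
        simp only [Equiv.symm_apply_apply]
        rw [if_neg (by rw [mate_mate]; exact not_lt.mpr (le_of_lt hlt)), mate_mate]
    have hφmem : ∀ v ∈ t₁.betaLeafPairs, φ v ∈ t₂.betaLeafPairs := by
      intro v hv
      rw [mem_betaLeafPairs_iff] at hv
      obtain ⟨hβ, hlt, hl1, hl2⟩ := hv
      have hmg : t₂.mate (g v) = g (t₁.mate v) := hgE.2.2.2 v
      by_cases hc : g v < g (t₁.mate v)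
      · rw [hφ_def]
        simp only [if_pos hc]
        refine mem_betaLeafPairs_iff.mpr ⟨by rw [hgE.2.2.1]; exact hβ, ?_, ?_, ?_⟩
        · rw [hmg]; exact hc
        · exact isoE_isLeaf hgE hl1
        · rw [hmg]; exact isoE_isLeaf hgE hl2
      · rw [hφ_def]
        simp only [if_neg hc]
        have hβm : t₁.colour (t₁.mate v) = some XColour.beta := (t₁.mate_beta v hβ).1
        have hmg2 : t₂.mate (g (t₁.mate v)) = g v := by
          rw [hgE.2.2.2, mate_mate]
        refine mem_betaLeafPairs_iff.mpr ⟨by rw [hgE.2.2.1]; exact hβm, ?_, ?_, ?_⟩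
        · rw [hmg2]
          exact lt_of_le_of_ne (not_lt.mp hc)
            (fun hh => (t₁.mate_beta v hβ).2.2 (g.injective hh))
        · exact isoE_isLeaf hgE hl2
        · rw [hmg2]; exact isoE_isLeaf hgE hl1
    -- recursion at t₁
    have hrec₁ := hfac.2 t₁ hpos₁ (fun ℓ _ => del1 t₁ ℓ) (fun v _ => del2 t₁ v)
      (fun ℓ h => alphaRemoval_del1 h) (fun v h => betaRemoval_del2 h)
    -- recursion at t₂
    have hrec₂ := hfac.2 t₂ hpos₂ (fun ℓ' _ => del1 t₁ (g.symm ℓ'))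
      (fun v' _ => del2 t₁ (pick v'))
      (fun ℓ' h => by
        have h1 : g.symm ℓ' ∈ t₁.alphaLeaves := isoE_mem_alphaLeaves hgs h
        have h2 := isoE_alphaRemoval hgE (alphaRemoval_del1 h1)
        rwa [Equiv.apply_symm_apply] at h2)
      (fun v' h => by
        obtain ⟨hmem, hcase⟩ := hpick v' h
        have h2 := isoE_betaRemoval hgE (betaRemoval_del2 hmem)
        rcases hcase with hc | hc
        · rwa [hc] at h2
        · rw [hc] at h2
          rw [mem_betaLeafPairs_iff] at h
          exact betaRemoval_flip h.1 h2)
    rw [Finset.sum_attach t₁.alphaLeaves (fun ℓ => 1 / fac (del1 t₁ ℓ)),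
      Finset.sum_attach t₁.betaLeafPairs (fun v => 1 / fac (del2 t₁ v))] at hrec₁
    rw [Finset.sum_attach t₂.alphaLeaves (fun ℓ' => 1 / fac (del1 t₁ (g.symm ℓ'))),
      Finset.sum_attach t₂.betaLeafPairs (fun v' => 1 / fac (del2 t₁ (pick v')))] at hrec₂
    have hSα : ∑ ℓ ∈ t₁.alphaLeaves, 1 / fac (del1 t₁ ℓ)
        = ∑ ℓ' ∈ t₂.alphaLeaves, 1 / fac (del1 t₁ (g.symm ℓ')) := by
      apply Finset.sum_bij (fun ℓ _ => g ℓ)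
      · intro ℓ hℓ; exact isoE_mem_alphaLeaves hgE hℓ
      · intro a ha b hb hab; exact g.injective hab
      · intro ℓ' hℓ'
        exact ⟨g.symm ℓ', isoE_mem_alphaLeaves hgs hℓ', by rw [Equiv.apply_symm_apply]⟩
      · intro ℓ hℓ
        rw [Equiv.symm_apply_apply]
    have hSβ : ∑ v ∈ t₁.betaLeafPairs, 1 / fac (del2 t₁ v)
        = ∑ v' ∈ t₂.betaLeafPairs, 1 / fac (del2 t₁ (pick v')) := by
      apply Finset.sum_bij (fun v _ => φ v)
      · exact hφmem
      · intro a ha b hb hab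
        have := congrArg pick hab
        rwa [hpickφ a ha, hpickφ b hb] at this
      · intro v' hv'
        refine ⟨pick v', (hpick v' hv').1, ?_⟩
        -- φ (pick v') = v'
        rcases (hpick v' hv').2 with hc | hc
        · rw [hφ_def]
          simp only
          have hmg : g (t₁.mate (pick v')) = t₂.mate (g (pick v')) := (hgE.2.2.2 _).symm
          rw [hmg, hc]
          rw [mem_betaLeafPairs_iff] at hv'
          rw [if_pos hv'.2.1]
        · rw [hφ_def]
          simp only
          have hmg : g (t₁.mate (pick v')) = t₂.mate (g (pick v')) := (hgE.2.2.2 _).symm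
          rw [hmg, hc, mate_mate]
          rw [mem_betaLeafPairs_iff] at hv'
          rw [if_neg (not_lt.mpr (le_of_lt hv'.2.1))]
      · intro v hv
        rw [hpickφ v hv]
    rw [← hSα, ← hSβ, ← hrec₁] at hrec₂
    have hE : t₁.effSize = t₂.effSize := effSize_iso (iso_of_isoE hgE)
    rw [← hE] at hrec₂
    have hne : ((t₁.effSize : ℚ)) ≠ 0 :=
      Nat.cast_ne_zero.mpr (by have := effSize_pos t₁; omega)
    exact div_same_left_inj hne hrec₂.symm

lemma fac_congr {S : Finset (Fin (t.n+1))} (h₁ : Del t S t₁) (h₂ : Del t S t₂) :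
    fac t₁ = fac t₂ :=
  fac_iso fac hfac (del_unique h₁ h₂)

end FacLemmas

section Comp
variable {t t₁ t₂ : ExoticTree}

lemma delE_comp {S : Finset (Fin (t.n+1))} {S' : Finset (Fin (t₁.n+1))}
    {e₁ : Fin (t₁.n+1) → Fin (t.n+1)} {e₂ : Fin (t₂.n+1) → Fin (t₁.n+1)}
    (h₁ : DelE t S t₁ e₁) (h₂ : DelE t₁ S' t₂ e₂) :
    DelE t (S ∪ S'.image e₁) t₂ (e₁ ∘ e₂) := by
  classical
  obtain ⟨inj₁, hz₁, hr₁, hc₁, hm₁, hp₁⟩ := h₁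
  obtain ⟨inj₂, hz₂, hr₂, hc₂, hm₂, hp₂⟩ := h₂
  have h0S' : (0 : Fin (t₁.n+1)) ∉ S' := (hr₂ 0).mp ⟨0, hz₂⟩
  refine ⟨inj₁.comp inj₂, by simp [Function.comp, hz₂, hz₁], ?_, ?_, ?_, ?_⟩
  · intro u
    rw [Finset.mem_union, Finset.mem_image]
    constructor
    · rintro ⟨w, rfl⟩
      simp only [Function.comp]
      push_neg
      constructor
      · exact (hr₁ _).mp ⟨e₂ w, rfl⟩
      · rintro s hs rfl2
        exact absurd ((hr₂ (e₂ w)).mp ⟨w, rfl⟩) (by rw [inj₁ rfl2] at hs; exact fun hh => hh hs)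
    · intro hu
      push_neg at hu
      obtain ⟨hu1, hu2⟩ := hu
      obtain ⟨w₁, hw₁⟩ := (hr₁ u).mpr hu1
      have hw₁S' : w₁ ∉ S' := fun hh => hu2 w₁ hh hw₁
      obtain ⟨w₂, hw₂⟩ := (hr₂ w₁).mpr hw₁S'
      exact ⟨w₂, by simp [Function.comp, hw₂, hw₁]⟩
  · intro w
    simp only [Function.comp]
    rw [hc₁, hc₂]
  · intro w
    simp only [Function.comp]
    rw [hm₁, hm₂]
  · intro w
    simp only [Function.comp]
    constructor
    · intro hu
      rw [Finset.mem_union] at hu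
      by_cases hS : t.parent (e₁ (e₂ w)) ∈ S
      · have h1 : t₁.parent (e₂ w) = 0 := (hp₁ (e₂ w)).1 hS
        have h2 : t₁.parent (e₂ w) ∉ S' := by rw [h1]; exact h0S'
        have h3 := (hp₂ w).2 h2
        rw [h1, ← hz₂] at h3
        rw [inj₂ h3]
      · have himg : t.parent (e₁ (e₂ w)) ∈ S'.image e₁ := hu.resolve_left hS
        rw [Finset.mem_image] at himg
        obtain ⟨s, hs, hse⟩ := himg
        have h3 := (hp₁ (e₂ w)).2 hS
        rw [← hse] at h3
        have h4 : t₁.parent (e₂ w) = s := inj₁ h3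
        rw [← h4] at hs
        exact (hp₂ w).1 hs
    · intro hu
      rw [Finset.mem_union] at hu
      push_neg at hu
      obtain ⟨hu1, hu2⟩ := hu
      have h3 := (hp₁ (e₂ w)).2 hu1
      have h4 : t₁.parent (e₂ w) ∉ S' := by
        intro hh
        exact hu2 (by rw [Finset.mem_image]; exact ⟨_, hh, h3⟩)
      have h5 := (hp₂ w).2 h4
      rw [← h5] at h3
      exact h3

lemma numAlpha_add_numBeta (t : ExoticTree) : t.numAlpha + t.numBeta = t.n := by
  classical
  have hnone : Finset.univ.filter (fun v : Fin (t.n+1) => t.colour v = none) = {0} := by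
    ext v
    simp only [Finset.mem_filter, Finset.mem_univ, true_and, Finset.mem_singleton]
    constructor
    · intro h
      by_contra hv
      exact t.colour_nonroot v hv h
    · rintro rfl
      exact t.colour_root
  have hsplit : (Finset.univ.filter (fun v : Fin (t.n+1) => t.colour v = none)).card
      + (Finset.univ.filter (fun v : Fin (t.n+1) => ¬ t.colour v = none)).card
      = (Finset.univ : Finset (Fin (t.n+1))).card :=
    Finset.card_filter_add_card_filter_not _
  have hun : Finset.univ.filter (fun v : Fin (t.n+1) => ¬ t.colour v = none)
      = (Finset.univ.filter fun v : Fin (t.n+1) => t.colour v = some XColour.alpha)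
        ∪ (Finset.univ.filter fun v : Fin (t.n+1) => t.colour v = some XColour.beta) := by
    ext v
    simp only [Finset.mem_filter, Finset.mem_univ, true_and, Finset.mem_union]
    rcases h : t.colour v with - | c
    · simp
    · cases c <;> simp
  have hdisj : Disjoint
      (Finset.univ.filter fun v : Fin (t.n+1) => t.colour v = some XColour.alpha)
      (Finset.univ.filter fun v : Fin (t.n+1) => t.colour v = some XColour.beta) := by
    rw [Finset.disjoint_left]
    intro v hv hw
    simp only [Finset.mem_filter, Finset.mem_univ, true_and] at hv hw
    rw [hv] at hw
    exact XColour.noConfusion (Option.some.inj hw)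
  rw [hnone, hun, Finset.card_union_of_disjoint hdisj, Finset.card_singleton,
    Finset.card_univ, Fintype.card_fin] at hsplit
  unfold numAlpha numBeta
  omega

lemma effSize_eq_one_iff (t : ExoticTree) : t.effSize = 1 ↔ t.n = 0 := by
  have h1 := numAlpha_add_numBeta t
  have h2 := two_mul_numPairs t
  unfold effSize
  omega

lemma n_pos_of_effSize {t : ExoticTree} (h : 2 ≤ t.effSize) : 0 < t.n := by
  have h1 := numAlpha_add_numBeta t
  have h2 := two_mul_numPairs t
  unfold effSize at h
  omega

end Comp

section DelTransport
variable {t : ExoticTree} {S : Finset (Fin (t.n+1))}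
  (h0 : (0 : Fin (t.n+1)) ∉ S) (hm : ∀ u, u ∉ S → t.mate u ∉ S)
include h0

lemma embC_ne_zero {w : Fin (t.n - S.card + 1)} (hw : w ≠ 0) : embC t S w ≠ 0 := by
  intro h
  apply hw
  apply embC_inj h0
  rw [embC_zero h0, h]

include hm

lemma delT'_mate_emb (w : Fin (t.n - S.card + 1)) :
    embC t S ((delT' h0 hm).mate w) = t.mate (embC t S w) :=
  ((delE_delT' h0 hm).2.2.2.2.1 w).symm

lemma isLeaf_delT' (hroot : ∀ s ∈ S, t.parent s = 0)
    {w : Fin (t.n - S.card + 1)} (hw : w ≠ 0) :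
    (delT' h0 hm).IsLeaf w ↔ t.IsLeaf (embC t S w) := by
  constructor
  · intro hlf u hu
    have huS : u ∉ S := by
      intro hs
      have := hroot u hs
      rw [hu] at this
      exact embC_ne_zero h0 hw this
    obtain ⟨w', rfl⟩ := embC_surj h0 huS
    have hpar : t.parent (embC t S w') ∉ S := by rw [hu]; exact embC_notmem h0 w
    have := ((delE_delT' h0 hm).2.2.2.2.2 w').2 hpar
    rw [hu] at this
    have hw' : (delT' h0 hm).parent w' = w := embC_inj h0 this
    rw [hlf w' hw']
  · intro hlf w' hw'
    by_cases hs : t.parent (embC t S w') ∈ S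
    · have := ((delE_delT' h0 hm).2.2.2.2.2 w').1 hs
      rw [this] at hw'
      exact absurd hw'.symm hw
    · have := ((delE_delT' h0 hm).2.2.2.2.2 w').2 hs
      rw [hw'] at this
      apply embC_inj h0
      exact hlf _ this.symm

lemma mem_alphaLeaves_delT' (hroot : ∀ s ∈ S, t.parent s = 0)
    (w : Fin (t.n - S.card + 1)) :
    w ∈ (delT' h0 hm).alphaLeaves ↔ embC t S w ∈ t.alphaLeaves := by
  refine Iff.trans (mem_alphaLeaves_iff (t := delT' h0 hm) (ℓ := w)) ?_
  rw [mem_alphaLeaves_iff]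
  have hcol : (delT' h0 hm).colour w = t.colour (embC t S w) := rfl
  constructor
  · intro ⟨h1, h2⟩
    have hw : w ≠ 0 := by
      intro hh
      rw [hh] at h1
      rw [(delT' h0 hm).colour_root] at h1
      exact absurd h1 (by simp)
    exact ⟨by rw [← hcol]; exact h1, (isLeaf_delT' h0 hm hroot hw).mp h2⟩
  · intro ⟨h1, h2⟩
    have hw : w ≠ 0 := by
      intro hh
      rw [hh, embC_zero h0, t.colour_root] at h1
      exact absurd h1 (by simp)
    exact ⟨by rw [hcol]; exact h1, (isLeaf_delT' h0 hm hroot hw).mpr h2⟩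

lemma mem_betaLeafPairs_delT' (hroot : ∀ s ∈ S, t.parent s = 0)
    (w : Fin (t.n - S.card + 1)) :
    w ∈ (delT' h0 hm).betaLeafPairs ↔ embC t S w ∈ t.betaLeafPairs := by
  refine Iff.trans (mem_betaLeafPairs_iff (t := delT' h0 hm) (v := w)) ?_
  rw [mem_betaLeafPairs_iff]
  have hcol : ∀ u, (delT' h0 hm).colour u = t.colour (embC t S u) := fun _ => rfl
  have hme := delT'_mate_emb h0 hm w
  constructor
  · intro ⟨h1, h2, h3, h4⟩
    have hw : w ≠ 0 := by
      intro hh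
      rw [hh, (delT' h0 hm).colour_root] at h1
      exact absurd h1 (by simp)
    have hwm : (delT' h0 hm).mate w ≠ 0 := by
      intro hh
      have := ((delT' h0 hm).mate_beta w h1).1
      rw [hh, (delT' h0 hm).colour_root] at this
      exact absurd this (by simp)
    refine ⟨by rw [← hcol]; exact h1, ?_, ?_, ?_⟩
    · rw [← hme]
      exact embC_strictMono h0 h2
    · exact (isLeaf_delT' h0 hm hroot hw).mp h3
    · rw [← hme]
      exact (isLeaf_delT' h0 hm hroot hwm).mp h4
  · intro ⟨h1, h2, h3, h4⟩
    have hw : w ≠ 0 := by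
      intro hh
      rw [hh, embC_zero h0, t.colour_root] at h1
      exact absurd h1 (by simp)
    have h1' : (delT' h0 hm).colour w = some XColour.beta := by rw [hcol]; exact h1
    have hwm : (delT' h0 hm).mate w ≠ 0 := by
      intro hh
      have := ((delT' h0 hm).mate_beta w h1').1
      rw [hh, (delT' h0 hm).colour_root] at this
      exact absurd this (by simp)
    refine ⟨h1', ?_, ?_, ?_⟩
    · have := embC_strictMono h0 (a := w) (b := (delT' h0 hm).mate w)
      rw [hme] at this
      exact (embC_strictMono h0).lt_iff_lt.mp (by rw [hme]; exact h2)
    · exact (isLeaf_delT' h0 hm hroot hw).mpr h3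
    · apply (isLeaf_delT' h0 hm hroot hwm).mpr
      rw [hme]
      exact h4

lemma parent_notmem_of_leaves (hleaf : ∀ s ∈ S, t.IsLeaf s)
    (w : Fin (t.n - S.card + 1)) : t.parent (embC t S w) ∉ S := by
  intro hs
  have := hleaf _ hs _ rfl
  exact embC_notmem h0 w (this ▸ hs)

lemma parent_delT'_eq_zero_iff (hleaf : ∀ s ∈ S, t.IsLeaf s)
    (w : Fin (t.n - S.card + 1)) :
    (delT' h0 hm).parent w = 0 ↔ t.parent (embC t S w) = 0 := by
  have hp := ((delE_delT' h0 hm).2.2.2.2.2 w).2 (parent_notmem_of_leaves h0 hm hleaf w)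
  constructor
  · intro h
    rw [← hp, h]
    exact embC_zero h0
  · intro h
    apply embC_inj h0
    rw [hp, h]
    exact (embC_zero h0).symm

lemma mem_rootAlphaChildren_delT' (hleaf : ∀ s ∈ S, t.IsLeaf s)
    (w : Fin (t.n - S.card + 1)) :
    w ∈ (delT' h0 hm).rootAlphaChildren ↔ embC t S w ∈ t.rootAlphaChildren := by
  refine Iff.trans (mem_rootAlphaChildren_iff (t := delT' h0 hm) (v := w)) ?_
  rw [mem_rootAlphaChildren_iff]
  have hcol : (delT' h0 hm).colour w = t.colour (embC t S w) := rfl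
  rw [hcol, parent_delT'_eq_zero_iff h0 hm hleaf]
  constructor
  · intro ⟨h1, h2, h3⟩
    exact ⟨h1, h2, embC_ne_zero h0 h3⟩
  · intro ⟨h1, h2, h3⟩
    refine ⟨h1, h2, ?_⟩
    intro hh
    rw [hh, embC_zero h0] at h3
    exact h3 rfl

lemma mem_rootBetaPairs_delT' (hleaf : ∀ s ∈ S, t.IsLeaf s)
    (w : Fin (t.n - S.card + 1)) :
    w ∈ (delT' h0 hm).rootBetaPairs ↔ embC t S w ∈ t.rootBetaPairs := by
  refine Iff.trans (mem_rootBetaPairs_iff (t := delT' h0 hm) (v := w)) ?_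
  rw [mem_rootBetaPairs_iff]
  have hcol : (delT' h0 hm).colour w = t.colour (embC t S w) := rfl
  have hme := delT'_mate_emb h0 hm w
  rw [hcol, parent_delT'_eq_zero_iff h0 hm hleaf]
  constructor
  · intro ⟨h1, h2, h3, h4⟩
    refine ⟨h1, ?_, h3, ?_⟩
    · rw [← hme]
      exact embC_strictMono h0 h2
    · rw [← hme]
      exact (parent_delT'_eq_zero_iff h0 hm hleaf _).mp h4
  · intro ⟨h1, h2, h3, h4⟩
    refine ⟨h1, ?_, h3, ?_⟩
    · exact (embC_strictMono h0).lt_iff_lt.mp (by rw [hme]; exact h2)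
    · apply (parent_delT'_eq_zero_iff h0 hm hleaf _).mpr
      rw [hme]
      exact h4

omit hm

lemma sum_embC (A' : Finset (Fin (t.n - S.card + 1))) (A : Finset (Fin (t.n+1)))
    (hmem : ∀ w, w ∈ A' ↔ embC t S w ∈ A) (f : Fin (t.n+1) → ℚ) :
    ∑ w ∈ A', f (embC t S w) = ∑ u ∈ A.filter (fun u => u ∉ S), f u := by
  classical
  apply Finset.sum_bij (fun w _ => embC t S w)
  · intro w hw
    rw [Finset.mem_filter]
    exact ⟨(hmem w).mp hw, embC_notmem h0 w⟩
  · intro a ha b hb hab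
    exact embC_inj h0 hab
  · intro u hu
    rw [Finset.mem_filter] at hu
    obtain ⟨w, rfl⟩ := embC_surj h0 hu.2
    exact ⟨w, (hmem w).mpr hu.1, rfl⟩
  · intro w hw
    rfl

end DelTransport

section BaseCase
variable {t : ExoticTree}

lemma base_sets (hE : t.effSize = 2) :
    t.rootAlphaChildren = t.alphaLeaves ∧ t.rootBetaPairs = t.betaLeafPairs := by
  classical
  have hP := two_mul_numPairs t
  have hN := numAlpha_add_numBeta t
  have hsum : t.numAlpha + t.numPairs = 1 := by unfold effSize at hE; omega
  rcases Nat.eq_zero_or_pos t.numPairs with hp0 | hppos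
  · -- one α vertex, no β
    have hB : t.numBeta = 0 := by omega
    have hn1 : t.n = 1 := by omega
    have hB' : (Finset.univ.filter fun v : Fin (t.n+1) =>
        t.colour v = some XColour.beta).card = 0 := hB
    have hnoβ : ∀ v : Fin (t.n+1), t.colour v ≠ some XColour.beta := by
      intro v hv
      have : v ∈ Finset.univ.filter (fun v : Fin (t.n+1) =>
          t.colour v = some XColour.beta) := by
        simp only [Finset.mem_filter, Finset.mem_univ, true_and]; exact hv
      rw [Finset.card_eq_zero.mp hB'] at this
      exact Finset.notMem_empty _ this
    have hpar : ∀ v : Fin (t.n+1), t.parent v = 0 := by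
      intro v
      have key : ∀ (k : ℕ), k = 1 → t.parent^[k] v = 0 → t.parent v = 0 := by
        rintro k rfl h
        simpa using h
      exact key t.n hn1 (t.reaches_root v)
    constructor
    · ext v
      rw [mem_rootAlphaChildren_iff, mem_alphaLeaves_iff]
      constructor
      · rintro ⟨hc, -, -⟩
        refine ⟨hc, ?_⟩
        intro w hw
        rw [hpar w] at hw
        exact absurd hw.symm (ne_zero_of_colour hc)
      · rintro ⟨hc, -⟩
        exact ⟨hc, hpar v, ne_zero_of_colour hc⟩
    · ext v
      rw [mem_rootBetaPairs_iff, mem_betaLeafPairs_iff]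
      constructor
      · rintro ⟨hc, -⟩
        exact absurd hc (hnoβ v)
      · rintro ⟨hc, -⟩
        exact absurd hc (hnoβ v)
  · -- one β pair, no α
    have hA : t.numAlpha = 0 := by omega
    have hB : t.numBeta = 2 := by omega
    have hA' : (Finset.univ.filter fun v : Fin (t.n+1) =>
        t.colour v = some XColour.alpha).card = 0 := hA
    have hnoα : ∀ v : Fin (t.n+1), t.colour v ≠ some XColour.alpha := by
      intro v hv
      have : v ∈ Finset.univ.filter (fun v : Fin (t.n+1) =>
          t.colour v = some XColour.alpha) := by
        simp only [Finset.mem_filter, Finset.mem_univ, true_and]; exact hv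
      rw [Finset.card_eq_zero.mp hA'] at this
      exact Finset.notMem_empty _ this
    have hB' : (Finset.univ.filter fun v : Fin (t.n+1) =>
        t.colour v = some XColour.beta).card = 2 := hB
    constructor
    · ext v
      rw [mem_rootAlphaChildren_iff, mem_alphaLeaves_iff]
      constructor
      · rintro ⟨hc, -⟩
        exact absurd hc (hnoα v)
      · rintro ⟨hc, -⟩
        exact absurd hc (hnoα v)
    · ext v
      rw [mem_rootBetaPairs_iff, mem_betaLeafPairs_iff]
      constructor
      · rintro ⟨hc, hlt, hp, hpm⟩
        have hv0 : v ≠ 0 := ne_zero_of_colour hc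
        have hmv0 : t.mate v ≠ 0 := ne_zero_of_colour (t.mate_beta v hc).1
        have hpair : ∀ w : Fin (t.n+1), w ≠ 0 → w = v ∨ w = t.mate v := by
          intro w hw
          have hsub : ({v, t.mate v} : Finset (Fin (t.n+1))) ⊆
              Finset.univ.filter (fun x => t.colour x = some XColour.beta) := by
            intro x hx
            simp only [Finset.mem_insert, Finset.mem_singleton] at hx
            simp only [Finset.mem_filter, Finset.mem_univ, true_and]
            rcases hx with rfl | rfl
            · exact hc
            · exact (t.mate_beta v hc).1
          have heq := Finset.eq_of_subset_of_card_le hsub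
            (by rw [hB', card_pair_mate hc])
          have hwβ : t.colour w = some XColour.beta := by
            rcases hcw : t.colour w with - | c
            · exact absurd hcw (t.colour_nonroot w hw)
            · cases c
              · exact absurd hcw (hnoα w)
              · rfl
          have : w ∈ ({v, t.mate v} : Finset (Fin (t.n+1))) := by
            rw [heq]
            simp only [Finset.mem_filter, Finset.mem_univ, true_and]
            exact hwβ
          simpa using this
        refine ⟨hc, hlt, ?_, ?_⟩
        · intro w hw
          by_cases hw0 : w = 0
          · rw [hw0, t.parent_root] at hw
            exact absurd hw.symm hv0
          · rcases hpair w hw0 with rfl | rfl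
            · rfl
            · rw [hpm] at hw
              exact absurd hw.symm hv0
        · intro w hw
          by_cases hw0 : w = 0
          · rw [hw0, t.parent_root] at hw
            exact absurd hw.symm hmv0
          · rcases hpair w hw0 with rfl | rfl
            · rw [hp] at hw
              exact absurd hw.symm hmv0
            · rfl
      · rintro ⟨hc, hlt, hl, hlm⟩
        have hv0 : v ≠ 0 := ne_zero_of_colour hc
        have hmv0 : t.mate v ≠ 0 := ne_zero_of_colour (t.mate_beta v hc).1
        have hnem : t.mate v ≠ v := (t.mate_beta v hc).2.2
        have hpair : ∀ w : Fin (t.n+1), w ≠ 0 → w = v ∨ w = t.mate v := by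
          intro w hw
          have hsub : ({v, t.mate v} : Finset (Fin (t.n+1))) ⊆
              Finset.univ.filter (fun x => t.colour x = some XColour.beta) := by
            intro x hx
            simp only [Finset.mem_insert, Finset.mem_singleton] at hx
            simp only [Finset.mem_filter, Finset.mem_univ, true_and]
            rcases hx with rfl | rfl
            · exact hc
            · exact (t.mate_beta v hc).1
          have heq := Finset.eq_of_subset_of_card_le hsub
            (by rw [hB', card_pair_mate hc])
          have hwβ : t.colour w = some XColour.beta := by
            rcases hcw : t.colour w with - | c
            · exact absurd hcw (t.colour_nonroot w hw)
            · cases c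
              · exact absurd hcw (hnoα w)
              · rfl
          have : w ∈ ({v, t.mate v} : Finset (Fin (t.n+1))) := by
            rw [heq]
            simp only [Finset.mem_filter, Finset.mem_univ, true_and]
            exact hwβ
          simpa using this
        refine ⟨hc, hlt, ?_, ?_⟩
        · by_cases h1 : t.parent v = 0
          · exact h1
          · rcases hpair _ h1 with hpv | hpv
            · exfalso
              have := t.reaches_root v
              rw [Function.iterate_fixed hpv t.n] at this
              exact hv0 this
            · exact absurd (hlm v hpv).symm hnem
        · by_cases h1 : t.parent (t.mate v) = 0
          · exact h1
          · rcases hpair _ h1 with hpv | hpv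
            · exact absurd (hl _ hpv) hnem
            · exfalso
              have := t.reaches_root (t.mate v)
              rw [Function.iterate_fixed hpv t.n] at this
              exact hmv0 this
end BaseCase

section Swap

lemma sum_filter_ne_swap {γ : Type*} [DecidableEq γ] (A B : Finset γ) (f g : γ → γ → ℚ)
    (hfg : ∀ a ∈ A, ∀ b ∈ B, f a b = g b a) :
    ∑ a ∈ A, ∑ b ∈ B.filter (fun b => b ≠ a), f a b
      = ∑ b ∈ B, ∑ a ∈ A.filter (fun a => a ≠ b), g b a := by
  have h1 : ∑ a ∈ A, ∑ b ∈ B.filter (fun b => b ≠ a), f a b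
      = ∑ a ∈ A, ∑ b ∈ B, if b ≠ a then f a b else 0 := by
    refine Finset.sum_congr rfl fun a _ => ?_
    rw [Finset.sum_filter]
  have h2 : ∑ b ∈ B, ∑ a ∈ A.filter (fun a => a ≠ b), g b a
      = ∑ b ∈ B, ∑ a ∈ A, if a ≠ b then g b a else 0 := by
    refine Finset.sum_congr rfl fun b _ => ?_
    rw [Finset.sum_filter]
  rw [h1, h2, Finset.sum_comm]
  refine Finset.sum_congr rfl fun b hb => Finset.sum_congr rfl fun a ha => ?_
  by_cases hab : b ≠ a
  · rw [if_pos hab, if_pos (Ne.symm hab), hfg a ha b hb]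
  · rw [if_neg hab, if_neg (fun hh => hab (Ne.symm hh))]

lemma sum_sum_comm {γ : Type*} (A B : Finset γ) (f g : γ → γ → ℚ)
    (hfg : ∀ a ∈ A, ∀ b ∈ B, f a b = g b a) :
    ∑ a ∈ A, ∑ b ∈ B, f a b = ∑ b ∈ B, ∑ a ∈ A, g b a := by
  rw [Finset.sum_comm]
  exact Finset.sum_congr rfl fun b hb => Finset.sum_congr rfl fun a ha => hfg a ha b hb

end Swap

section FacExpand
variable {t : ExoticTree} {S : Finset (Fin (t.n+1))}
  (fac : ExoticTree → ℚ) (hfac : IsTreeFactorial fac)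
  (h0 : (0 : Fin (t.n+1)) ∉ S) (hm : ∀ u, u ∉ S → t.mate u ∉ S)
include hfac

lemma leaf_expansion (hpos : 0 < t.n) :
    (t.effSize : ℚ) / fac t = (∑ ℓ ∈ t.alphaLeaves, 1 / fac (del1 t ℓ))
      + ∑ v ∈ t.betaLeafPairs, 1 / fac (del2 t v) := by
  have h := hfac.2 t hpos (fun ℓ _ => del1 t ℓ) (fun v _ => del2 t v)
    (fun ℓ hh => alphaRemoval_del1 hh) (fun v hh => betaRemoval_del2 hh)
  rwa [Finset.sum_attach t.alphaLeaves (fun ℓ => 1 / fac (del1 t ℓ)),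
    Finset.sum_attach t.betaLeafPairs (fun v => 1 / fac (del2 t v))] at h

include h0 hm

lemma fac_del1_delT' {w : Fin (t.n - S.card + 1)}
    (hw : (delT' h0 hm).colour w = some XColour.alpha) :
    fac (del1 (delT' h0 hm) w) = fac (delT t (insert (embC t S w) S)) := by
  classical
  have hcolw : t.colour (embC t S w) = some XColour.alpha := hw
  obtain ⟨e₂, he₂⟩ := del_del1 hw
  have hcomp := delE_comp (delE_delT' h0 hm) he₂
  have hset : S ∪ ({w} : Finset (Fin (t.n - S.card + 1))).image (embC t S)
      = insert (embC t S w) S := by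
    rw [Finset.image_singleton]
    ext u
    simp only [Finset.mem_union, Finset.mem_insert, Finset.mem_singleton]
    tauto
  rw [hset] at hcomp
  have h0' : (0 : Fin (t.n+1)) ∉ insert (embC t S w) S := by
    simp only [Finset.mem_insert]
    rintro (h | h)
    · exact ne_zero_of_colour hcolw h.symm
    · exact h0 h
  have hm' : ∀ u, u ∉ insert (embC t S w) S → t.mate u ∉ insert (embC t S w) S := by
    intro u hu hc
    simp only [Finset.mem_insert] at hu hc
    push_neg at hu
    rcases hc with h | h
    · apply hu.1
      rw [← mate_mate t u, h, t.mate_nonbeta _ (by rw [hcolw]; simp)]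
    · exact absurd h (hm u hu.2)
  exact fac_congr fac hfac ⟨_, hcomp⟩ (del_delT h0' hm')

lemma fac_del2_delT' {w : Fin (t.n - S.card + 1)}
    (hw : (delT' h0 hm).colour w = some XColour.beta) :
    fac (del2 (delT' h0 hm) w)
      = fac (delT t (insert (embC t S w) (insert (t.mate (embC t S w)) S))) := by
  classical
  have hcolw : t.colour (embC t S w) = some XColour.beta := hw
  have hmem := delT'_mate_emb h0 hm w
  obtain ⟨e₂, he₂⟩ := del_del2 hw
  have hcomp := delE_comp (delE_delT' h0 hm) he₂
  have hset : S ∪ ({w, (delT' h0 hm).mate w} : Finset _).image (embC t S)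
      = insert (embC t S w) (insert (t.mate (embC t S w)) S) := by
    rw [Finset.image_insert, Finset.image_singleton, hmem]
    ext u
    simp only [Finset.mem_union, Finset.mem_insert, Finset.mem_singleton]
    tauto
  rw [hset] at hcomp
  have hβm : t.colour (t.mate (embC t S w)) = some XColour.beta :=
    (t.mate_beta _ hcolw).1
  have h0' : (0 : Fin (t.n+1)) ∉ insert (embC t S w) (insert (t.mate (embC t S w)) S) := by
    simp only [Finset.mem_insert]
    rintro (h | h | h)
    · exact ne_zero_of_colour hcolw h.symm
    · exact ne_zero_of_colour hβm h.symm
    · exact h0 h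
  have hm' : ∀ u, u ∉ insert (embC t S w) (insert (t.mate (embC t S w)) S) →
      t.mate u ∉ insert (embC t S w) (insert (t.mate (embC t S w)) S) := by
    intro u hu hc
    simp only [Finset.mem_insert] at hu hc
    push_neg at hu
    rcases hc with h | h | h
    · apply hu.2.1
      rw [← mate_mate t u, h]
    · apply hu.1
      rw [← mate_mate t u, h, mate_mate]
    · exact absurd h (hm u hu.2.2)
  exact fac_congr fac hfac ⟨_, hcomp⟩ (del_delT h0' hm')

lemma sum_rootAlpha_delT' (hleaf : ∀ s ∈ S, t.IsLeaf s) :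
    ∑ u' ∈ (delT' h0 hm).rootAlphaChildren, 1 / fac (del1 (delT' h0 hm) u')
      = ∑ u ∈ t.rootAlphaChildren.filter (fun u => u ∉ S),
          1 / fac (delT t (insert u S)) := by
  have hstep : ∀ u' ∈ (delT' h0 hm).rootAlphaChildren,
      1 / fac (del1 (delT' h0 hm) u')
        = 1 / fac (delT t (insert (embC t S u') S)) := by
    intro u' hu'
    rw [mem_rootAlphaChildren_iff] at hu'
    rw [fac_del1_delT' fac hfac h0 hm hu'.1]
  rw [Finset.sum_congr rfl hstep]
  exact sum_embC h0 _ _ (fun w => mem_rootAlphaChildren_delT' h0 hm hleaf w)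
    (fun u => 1 / fac (delT t (insert u S)))

lemma sum_rootBeta_delT' (hleaf : ∀ s ∈ S, t.IsLeaf s) :
    ∑ v' ∈ (delT' h0 hm).rootBetaPairs, 1 / fac (del2 (delT' h0 hm) v')
      = ∑ v ∈ t.rootBetaPairs.filter (fun v => v ∉ S),
          1 / fac (delT t (insert v (insert (t.mate v) S))) := by
  have hstep : ∀ v' ∈ (delT' h0 hm).rootBetaPairs,
      1 / fac (del2 (delT' h0 hm) v')
        = 1 / fac (delT t (insert (embC t S v') (insert (t.mate (embC t S v')) S))) := by
    intro v' hv'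
    rw [mem_rootBetaPairs_iff] at hv'
    rw [fac_del2_delT' fac hfac h0 hm hv'.1]
  rw [Finset.sum_congr rfl hstep]
  exact sum_embC h0 _ _ (fun w => mem_rootBetaPairs_delT' h0 hm hleaf w)
    (fun u => 1 / fac (delT t (insert u (insert (t.mate u) S))))

lemma sum_alphaLeaves_delT'_sum (hroot : ∀ s ∈ S, t.parent s = 0) :
    ∑ ℓ' ∈ (delT' h0 hm).alphaLeaves, 1 / fac (del1 (delT' h0 hm) ℓ')
      = ∑ ℓ ∈ t.alphaLeaves.filter (fun u => u ∉ S),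
          1 / fac (delT t (insert ℓ S)) := by
  have hstep : ∀ ℓ' ∈ (delT' h0 hm).alphaLeaves,
      1 / fac (del1 (delT' h0 hm) ℓ')
        = 1 / fac (delT t (insert (embC t S ℓ') S)) := by
    intro ℓ' hℓ'
    rw [mem_alphaLeaves_iff] at hℓ'
    rw [fac_del1_delT' fac hfac h0 hm hℓ'.1]
  rw [Finset.sum_congr rfl hstep]
  exact sum_embC h0 _ _ (fun w => mem_alphaLeaves_delT' h0 hm hroot w)
    (fun u => 1 / fac (delT t (insert u S)))

lemma sum_betaLeafPairs_delT'_sum (hroot : ∀ s ∈ S, t.parent s = 0) :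
    ∑ w' ∈ (delT' h0 hm).betaLeafPairs, 1 / fac (del2 (delT' h0 hm) w')
      = ∑ w ∈ t.betaLeafPairs.filter (fun u => u ∉ S),
          1 / fac (delT t (insert w (insert (t.mate w) S))) := by
  have hstep : ∀ w' ∈ (delT' h0 hm).betaLeafPairs,
      1 / fac (del2 (delT' h0 hm) w')
        = 1 / fac (delT t (insert (embC t S w') (insert (t.mate (embC t S w')) S))) := by
    intro w' hw'
    rw [mem_betaLeafPairs_iff] at hw'
    rw [fac_del2_delT' fac hfac h0 hm hw'.1]
  rw [Finset.sum_congr rfl hstep]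
  exact sum_embC h0 _ _ (fun w => mem_betaLeafPairs_delT' h0 hm hroot w)
    (fun u => 1 / fac (delT t (insert u (insert (t.mate u) S))))

/-- expansion of a contracted tree by the leaf recursion. -/
lemma root_expand (hroot : ∀ s ∈ S, t.parent s = 0) (hpos : 0 < (delT' h0 hm).n) :
    ((delT' h0 hm).effSize : ℚ) / fac (delT' h0 hm)
      = (∑ ℓ ∈ t.alphaLeaves.filter (fun u => u ∉ S), 1 / fac (delT t (insert ℓ S)))
        + ∑ w ∈ t.betaLeafPairs.filter (fun u => u ∉ S),
            1 / fac (delT t (insert w (insert (t.mate w) S))) := by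
  rw [leaf_expansion fac hfac hpos,
    sum_alphaLeaves_delT'_sum fac hfac h0 hm hroot,
    sum_betaLeafPairs_delT'_sum fac hfac h0 hm hroot]

end FacExpand

section Key
variable (fac : ExoticTree → ℚ) (hfac : IsTreeFactorial fac)
include hfac

set_option maxHeartbeats 4000000 in
lemma key : ∀ N : ℕ, ∀ t : ExoticTree, t.n = N → 2 ≤ t.effSize →
    (t.effSize : ℚ) / fac t =
      (∑ u ∈ t.rootAlphaChildren, 1 / fac (del1 t u)) +
      ∑ v ∈ t.rootBetaPairs, 1 / fac (del2 t v) := by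
  classical
  intro N
  induction N using Nat.strong_induction_on with
  | _ N IH =>
  intro t hN hE
  rcases eq_or_lt_of_le hE with hE2 | hE3
  · -- base case: effSize = 2
    obtain ⟨hRα, hRβ⟩ := base_sets hE2.symm
    rw [hRα, hRβ]
    exact leaf_expansion fac hfac (n_pos_of_effSize hE)
  · -- inductive step: effSize ≥ 3
    have hpos : 0 < t.n := n_pos_of_effSize hE
    have hc0 : ((t.effSize - 1 : ℕ) : ℚ) ≠ 0 := Nat.cast_ne_zero.mpr (by omega)
    rw [leaf_expansion fac hfac hpos]
    apply mul_left_cancel₀ hc0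
    rw [mul_add, mul_add, Finset.mul_sum, Finset.mul_sum, Finset.mul_sum, Finset.mul_sum]
    -- ============ leaf-side terms, via the induction hypothesis ============
    have hLtermα : ∀ ℓ ∈ t.alphaLeaves,
        ((t.effSize - 1 : ℕ) : ℚ) * (1 / fac (del1 t ℓ))
          = (∑ u ∈ t.rootAlphaChildren.filter (fun x => x ≠ ℓ),
              1 / fac (delT t (insert u ({ℓ} : Finset _))))
            + ∑ v ∈ t.rootBetaPairs,
                1 / fac (delT t (insert v (insert (t.mate v) ({ℓ} : Finset _)))) := by
      intro ℓ hℓ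
      have hcol : t.colour ℓ = some XColour.alpha := (mem_alphaLeaves_iff.mp hℓ).1
      have hleafℓ : t.IsLeaf ℓ := (mem_alphaLeaves_iff.mp hℓ).2
      have h0' := (del1_hyps hcol).1
      have hm' := (del1_hyps hcol).2
      have hdeq : del1 t ℓ = delT' h0' hm' := delT_eq h0' hm'
      have hES : t.effSize = (del1 t ℓ).effSize + 1 := effSize_del1 hcol
      have hn : (del1 t ℓ).n + 1 = t.n := n_del1 hcol
      have hIH := IH (del1 t ℓ).n (by omega) (del1 t ℓ) rfl (by omega)
      rw [hdeq] at hIH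
      have hleafS : ∀ s ∈ ({ℓ} : Finset (Fin (t.n+1))), t.IsLeaf s := by
        intro s hs
        rw [Finset.mem_singleton] at hs
        rwa [hs]
      rw [sum_rootAlpha_delT' fac hfac h0' hm' hleafS,
        sum_rootBeta_delT' fac hfac h0' hm' hleafS] at hIH
      have hcast : ((t.effSize - 1 : ℕ) : ℚ) = (((delT' h0' hm').effSize : ℕ) : ℚ) := by
        rw [← hdeq]
        exact Nat.cast_inj.mpr (by omega)
      have hfα : t.rootAlphaChildren.filter (fun u => u ∉ ({ℓ} : Finset _))
          = t.rootAlphaChildren.filter (fun x => x ≠ ℓ) := by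
        ext x
        simp only [Finset.mem_filter, Finset.mem_singleton]
      have hfβ : t.rootBetaPairs.filter (fun v => v ∉ ({ℓ} : Finset _))
          = t.rootBetaPairs := by
        apply Finset.filter_true_of_mem
        intro v hv hmem
        rw [Finset.mem_singleton] at hmem
        subst hmem
        have hb := (mem_rootBetaPairs_iff.mp hv).1
        rw [hcol] at hb
        simp at hb
      rw [mul_one_div, hdeq, hcast, hIH, hfα, hfβ]
    have hLtermβ : ∀ w ∈ t.betaLeafPairs,
        ((t.effSize - 1 : ℕ) : ℚ) * (1 / fac (del2 t w))
          = (∑ u ∈ t.rootAlphaChildren,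
              1 / fac (delT t (insert u ({w, t.mate w} : Finset _))))
            + ∑ v ∈ t.rootBetaPairs.filter (fun x => x ≠ w),
                1 / fac (delT t (insert v (insert (t.mate v) ({w, t.mate w} : Finset _)))) := by
      intro w hw
      obtain ⟨hcol, hlt, hlf1, hlf2⟩ := mem_betaLeafPairs_iff.mp hw
      have h0' := (del2_hyps hcol).1
      have hm' := (del2_hyps hcol).2
      have hdeq : del2 t w = delT' h0' hm' := delT_eq h0' hm'
      have hES : t.effSize = (del2 t w).effSize + 1 := effSize_del2 hcol
      have hn : (del2 t w).n + 2 = t.n := n_del2 hcol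
      have hIH := IH (del2 t w).n (by omega) (del2 t w) rfl (by omega)
      rw [hdeq] at hIH
      have hleafS : ∀ s ∈ ({w, t.mate w} : Finset (Fin (t.n+1))), t.IsLeaf s := by
        intro s hs
        simp only [Finset.mem_insert, Finset.mem_singleton] at hs
        rcases hs with rfl | rfl
        · exact hlf1
        · exact hlf2
      rw [sum_rootAlpha_delT' fac hfac h0' hm' hleafS,
        sum_rootBeta_delT' fac hfac h0' hm' hleafS] at hIH
      have hcast : ((t.effSize - 1 : ℕ) : ℚ) = (((delT' h0' hm').effSize : ℕ) : ℚ) := by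
        rw [← hdeq]
        exact Nat.cast_inj.mpr (by omega)
      have hfα : t.rootAlphaChildren.filter (fun u => u ∉ ({w, t.mate w} : Finset _))
          = t.rootAlphaChildren := by
        apply Finset.filter_true_of_mem
        intro u hu hmem
        simp only [Finset.mem_insert, Finset.mem_singleton] at hmem
        have ha := (mem_rootAlphaChildren_iff.mp hu).1
        rcases hmem with rfl | rfl
        · rw [hcol] at ha; simp at ha
        · rw [(t.mate_beta w hcol).1] at ha; simp at ha
      have hfβ : t.rootBetaPairs.filter (fun v => v ∉ ({w, t.mate w} : Finset _))
          = t.rootBetaPairs.filter (fun x => x ≠ w) := by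
        ext x
        simp only [Finset.mem_filter, Finset.mem_insert, Finset.mem_singleton]
        constructor
        · rintro ⟨hx, hx2⟩
          push_neg at hx2
          exact ⟨hx, hx2.1⟩
        · rintro ⟨hx, hx2⟩
          refine ⟨hx, ?_⟩
          push_neg
          refine ⟨hx2, ?_⟩
          intro hh
          have h1 := (mem_rootBetaPairs_iff.mp hx).2.1
          rw [hh, mate_mate] at h1
          exact absurd (hlt.trans h1) (lt_irrefl w)
      rw [mul_one_div, hdeq, hcast, hIH, hfα, hfβ]
    -- ============ root-side terms, via the leaf recursion ============
    have hRtermα : ∀ u ∈ t.rootAlphaChildren,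
        ((t.effSize - 1 : ℕ) : ℚ) * (1 / fac (del1 t u))
          = (∑ ℓ ∈ t.alphaLeaves.filter (fun x => x ≠ u),
              1 / fac (delT t (insert ℓ ({u} : Finset _))))
            + ∑ w ∈ t.betaLeafPairs,
                1 / fac (delT t (insert w (insert (t.mate w) ({u} : Finset _)))) := by
      intro u hu
      obtain ⟨hcol, hp, hne⟩ := mem_rootAlphaChildren_iff.mp hu
      have h0' := (del1_hyps hcol).1
      have hm' := (del1_hyps hcol).2
      have hdeq : del1 t u = delT' h0' hm' := delT_eq h0' hm'
      have hES : t.effSize = (del1 t u).effSize + 1 := effSize_del1 hcol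
      have hrootS : ∀ s ∈ ({u} : Finset (Fin (t.n+1))), t.parent s = 0 := by
        intro s hs
        rw [Finset.mem_singleton] at hs
        rwa [hs]
      have hpos' : 0 < (delT' h0' hm').n := by
        apply n_pos_of_effSize
        rw [← hdeq]
        omega
      have hexp := root_expand fac hfac h0' hm' hrootS hpos'
      have hcast : ((t.effSize - 1 : ℕ) : ℚ) = (((delT' h0' hm').effSize : ℕ) : ℚ) := by
        rw [← hdeq]
        exact Nat.cast_inj.mpr (by omega)
      have hfα : t.alphaLeaves.filter (fun x => x ∉ ({u} : Finset _))
          = t.alphaLeaves.filter (fun x => x ≠ u) := by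
        ext x
        simp only [Finset.mem_filter, Finset.mem_singleton]
      have hfβ : t.betaLeafPairs.filter (fun x => x ∉ ({u} : Finset _))
          = t.betaLeafPairs := by
        apply Finset.filter_true_of_mem
        intro w hw hmem
        rw [Finset.mem_singleton] at hmem
        subst hmem
        have hb := (mem_betaLeafPairs_iff.mp hw).1
        rw [hcol] at hb
        simp at hb
      rw [mul_one_div, hdeq, hcast, hexp, hfα, hfβ]
    have hRtermβ : ∀ v ∈ t.rootBetaPairs,
        ((t.effSize - 1 : ℕ) : ℚ) * (1 / fac (del2 t v))
          = (∑ ℓ ∈ t.alphaLeaves,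
              1 / fac (delT t (insert ℓ ({v, t.mate v} : Finset _))))
            + ∑ w ∈ t.betaLeafPairs.filter (fun x => x ≠ v),
                1 / fac (delT t (insert w (insert (t.mate w) ({v, t.mate v} : Finset _)))) := by
      intro v hv
      obtain ⟨hcol, hlt, hp, hpm⟩ := mem_rootBetaPairs_iff.mp hv
      have h0' := (del2_hyps hcol).1
      have hm' := (del2_hyps hcol).2
      have hdeq : del2 t v = delT' h0' hm' := delT_eq h0' hm'
      have hES : t.effSize = (del2 t v).effSize + 1 := effSize_del2 hcol
      have hrootS : ∀ s ∈ ({v, t.mate v} : Finset (Fin (t.n+1))), t.parent s = 0 := by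
        intro s hs
        simp only [Finset.mem_insert, Finset.mem_singleton] at hs
        rcases hs with rfl | rfl
        · exact hp
        · exact hpm
      have hpos' : 0 < (delT' h0' hm').n := by
        apply n_pos_of_effSize
        rw [← hdeq]
        omega
      have hexp := root_expand fac hfac h0' hm' hrootS hpos'
      have hcast : ((t.effSize - 1 : ℕ) : ℚ) = (((delT' h0' hm').effSize : ℕ) : ℚ) := by
        rw [← hdeq]
        exact Nat.cast_inj.mpr (by omega)
      have hfα : t.alphaLeaves.filter (fun x => x ∉ ({v, t.mate v} : Finset _))
          = t.alphaLeaves := by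
        apply Finset.filter_true_of_mem
        intro ℓ hℓ hmem
        simp only [Finset.mem_insert, Finset.mem_singleton] at hmem
        have ha := (mem_alphaLeaves_iff.mp hℓ).1
        rcases hmem with rfl | rfl
        · rw [hcol] at ha; simp at ha
        · rw [(t.mate_beta v hcol).1] at ha; simp at ha
      have hfβ : t.betaLeafPairs.filter (fun x => x ∉ ({v, t.mate v} : Finset _))
          = t.betaLeafPairs.filter (fun x => x ≠ v) := by
        ext x
        simp only [Finset.mem_filter, Finset.mem_insert, Finset.mem_singleton]
        constructor
        · rintro ⟨hx, hx2⟩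
          push_neg at hx2
          exact ⟨hx, hx2.1⟩
        · rintro ⟨hx, hx2⟩
          refine ⟨hx, ?_⟩
          push_neg
          refine ⟨hx2, ?_⟩
          intro hh
          have h1 := (mem_betaLeafPairs_iff.mp hx).2.1
          rw [hh, mate_mate] at h1
          exact absurd (hlt.trans h1) (lt_irrefl v)
      rw [mul_one_div, hdeq, hcast, hexp, hfα, hfβ]
    rw [Finset.sum_congr rfl hLtermα, Finset.sum_congr rfl hLtermβ,
      Finset.sum_congr rfl hRtermα, Finset.sum_congr rfl hRtermβ]
    rw [Finset.sum_add_distrib, Finset.sum_add_distrib,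
      Finset.sum_add_distrib, Finset.sum_add_distrib]
    -- four matching double sums
    have hA : ∑ ℓ ∈ t.alphaLeaves, ∑ u ∈ t.rootAlphaChildren.filter (fun x => x ≠ ℓ),
          1 / fac (delT t (insert u ({ℓ} : Finset _)))
        = ∑ u ∈ t.rootAlphaChildren, ∑ ℓ ∈ t.alphaLeaves.filter (fun x => x ≠ u),
          1 / fac (delT t (insert ℓ ({u} : Finset _))) := by
      apply sum_filter_ne_swap
      intro a _ b _
      have : insert b ({a} : Finset (Fin (t.n+1))) = insert a ({b} : Finset _) :=
        Finset.pair_comm b a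
      rw [this]
    have hB : ∑ ℓ ∈ t.alphaLeaves, ∑ v ∈ t.rootBetaPairs,
          1 / fac (delT t (insert v (insert (t.mate v) ({ℓ} : Finset _))))
        = ∑ v ∈ t.rootBetaPairs, ∑ ℓ ∈ t.alphaLeaves,
          1 / fac (delT t (insert ℓ ({v, t.mate v} : Finset _))) := by
      apply sum_sum_comm
      intro a _ b _
      have : insert b (insert (t.mate b) ({a} : Finset (Fin (t.n+1))))
          = insert a ({b, t.mate b} : Finset _) := by
        ext x
        simp only [Finset.mem_insert, Finset.mem_singleton]
        tauto
      rw [this]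
    have hC : ∑ w ∈ t.betaLeafPairs, ∑ u ∈ t.rootAlphaChildren,
          1 / fac (delT t (insert u ({w, t.mate w} : Finset _)))
        = ∑ u ∈ t.rootAlphaChildren, ∑ w ∈ t.betaLeafPairs,
          1 / fac (delT t (insert w (insert (t.mate w) ({u} : Finset _)))) := by
      apply sum_sum_comm
      intro a _ b _
      have : insert b ({a, t.mate a} : Finset (Fin (t.n+1)))
          = insert a (insert (t.mate a) ({b} : Finset _)) := by
        ext x
        simp only [Finset.mem_insert, Finset.mem_singleton]
        tauto
      rw [this]
    have hD : ∑ w ∈ t.betaLeafPairs, ∑ v ∈ t.rootBetaPairs.filter (fun x => x ≠ w),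
          1 / fac (delT t (insert v (insert (t.mate v) ({w, t.mate w} : Finset _))))
        = ∑ v ∈ t.rootBetaPairs, ∑ w ∈ t.betaLeafPairs.filter (fun x => x ≠ v),
          1 / fac (delT t (insert w (insert (t.mate w) ({v, t.mate v} : Finset _)))) := by
      apply sum_filter_ne_swap
      intro a _ b _
      have : insert b (insert (t.mate b) ({a, t.mate a} : Finset (Fin (t.n+1))))
          = insert a (insert (t.mate a) ({b, t.mate b} : Finset _)) := by
        ext x
        simp only [Finset.mem_insert, Finset.mem_singleton]
        tauto
      rw [this]
    rw [hA, hB, hC, hD]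
    ring

end Key
end ExoticTree

open ExoticTree

/-- For an exotic coloured tree `τ` with effective size `|τ| > 1`,
`|τ|!/τ! = Σ_{τ' ∈ R_e⁻(τ)} |τ'|!/τ'!`, the sum running (with multiplicity, one member
per choice of effective edge at the root) over the family `R_e⁻(τ)` of trees obtained
from `τ` by removing one effective edge at the root. -/
theorem stmt6 (fac : ExoticTree → ℚ) (hfac : IsTreeFactorial fac)
    (t : ExoticTree) (ht : 1 < t.effSize)
    (cα : (v : Fin (t.n + 1)) → v ∈ t.rootAlphaChildren → ExoticTree)
    (cβ : (v : Fin (t.n + 1)) → v ∈ t.rootBetaPairs → ExoticTree)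
    (hcα : ∀ v h, t.IsRootAlphaContraction v (cα v h))
    (hcβ : ∀ v h, t.IsRootBetaPairContraction v (cβ v h)) :
    (Nat.factorial t.effSize : ℚ) / fac t =
      (∑ v ∈ t.rootAlphaChildren.attach,
        (Nat.factorial (cα v.1 v.2).effSize : ℚ) / fac (cα v.1 v.2)) +
      ∑ v ∈ t.rootBetaPairs.attach,
        (Nat.factorial (cβ v.1 v.2).effSize : ℚ) / fac (cβ v.1 v.2) := by
  classical
  obtain ⟨m, hmE⟩ : ∃ m, t.effSize = m + 1 := ⟨t.effSize - 1, by omega⟩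
  have htermα : ∀ x : {v // v ∈ t.rootAlphaChildren},
      (Nat.factorial (cα x.1 x.2).effSize : ℚ) / fac (cα x.1 x.2)
        = (Nat.factorial m : ℚ) * (1 / fac (ExoticTree.del1 t x.1)) := by
    intro x
    have hc : t.colour x.1 = some XColour.alpha := (hcα x.1 x.2).1
    have hd1 := ExoticTree.del_of_rootAlphaContraction (hcα x.1 x.2)
    have hd2 := ExoticTree.del_del1 hc
    have he1 := ExoticTree.effSize_congr hd1 hd2
    have he2 := ExoticTree.effSize_del1 hc
    have h3 : (cα x.1 x.2).effSize = m := by omega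
    rw [h3, ExoticTree.fac_congr fac hfac hd1 hd2, mul_one_div]
  have htermβ : ∀ x : {v // v ∈ t.rootBetaPairs},
      (Nat.factorial (cβ x.1 x.2).effSize : ℚ) / fac (cβ x.1 x.2)
        = (Nat.factorial m : ℚ) * (1 / fac (ExoticTree.del2 t x.1)) := by
    intro x
    have hc : t.colour x.1 = some XColour.beta := (hcβ x.1 x.2).1
    have hd1 := ExoticTree.del_of_rootBetaPairContraction (hcβ x.1 x.2)
    have hd2 := ExoticTree.del_del2 hc
    have he1 := ExoticTree.effSize_congr hd1 hd2
    have he2 := ExoticTree.effSize_del2 hc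
    have h3 : (cβ x.1 x.2).effSize = m := by omega
    rw [h3, ExoticTree.fac_congr fac hfac hd1 hd2, mul_one_div]
  have hsumα : (∑ v ∈ t.rootAlphaChildren.attach,
      (Nat.factorial (cα v.1 v.2).effSize : ℚ) / fac (cα v.1 v.2))
      = (Nat.factorial m : ℚ) * ∑ v ∈ t.rootAlphaChildren, 1 / fac (ExoticTree.del1 t v) := by
    rw [Finset.mul_sum, ← Finset.sum_attach t.rootAlphaChildren
      (fun v => (Nat.factorial m : ℚ) * (1 / fac (ExoticTree.del1 t v)))]
    exact Finset.sum_congr rfl (fun x _ => htermα x)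
  have hsumβ : (∑ v ∈ t.rootBetaPairs.attach,
      (Nat.factorial (cβ v.1 v.2).effSize : ℚ) / fac (cβ v.1 v.2))
      = (Nat.factorial m : ℚ) * ∑ v ∈ t.rootBetaPairs, 1 / fac (ExoticTree.del2 t v) := by
    rw [Finset.mul_sum, ← Finset.sum_attach t.rootBetaPairs
      (fun v => (Nat.factorial m : ℚ) * (1 / fac (ExoticTree.del2 t v)))]
    exact Finset.sum_congr rfl (fun x _ => htermβ x)
  rw [hsumα, hsumβ, ← mul_add, ← ExoticTree.key fac hfac t.n t rfl ht]
  rw [hmE, Nat.factorial_succ]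
  push_cast
  ring
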